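/- arXiv:2308.03434 — 6 statements merged into one kernel-verified Lean document; each statement's English description precedes it below -/
import Mathlib

section
/- Let G be a split graph with a KS-partition (A,B) such that |A| = ω(G) and |B| = α(G), where ω and α are the clique number and independence number. Then (A,B) is the unique KS-partition of G; consequently every automorphism of G maps A onto A and B onto B. -/
/-- A balanced split graph (one whose KS-partition `(A,B)` satisfies `|A| = ω(G)` and
`|B| = α(G)`) has a unique KS-partition; consequently every automorphism of `G` maps `A`
onto `A` and `B` onto `B`. -/
theorem balanced_split_unique_KS {V : Type*} [Fintype V] [DecidableEq V]
    (G : SimpleGraph V) (A B : Finset V)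
    (hpart : A ∪ B = Finset.univ) (hdisj : Disjoint A B)
    (hclique : ∀ a ∈ A, ∀ b ∈ A, a ≠ b → G.Adj a b)
    (hindep : ∀ a ∈ B, ∀ b ∈ B, ¬ G.Adj a b)
    (hA : ∀ s : Finset V, (∀ a ∈ s, ∀ b ∈ s, a ≠ b → G.Adj a b) → s.card ≤ A.card)
    (hB : ∀ s : Finset V, (∀ a ∈ s, ∀ b ∈ s, ¬ G.Adj a b) → s.card ≤ B.card) :
    (∀ A' B' : Finset V, A' ∪ B' = Finset.univ → Disjoint A' B' →
      (∀ a ∈ A', ∀ b ∈ A', a ≠ b → G.Adj a b) →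
      (∀ a ∈ B', ∀ b ∈ B', ¬ G.Adj a b) → A' = A ∧ B' = B) ∧
    (∀ π : G ≃g G, (∀ v, π v ∈ A ↔ v ∈ A) ∧ (∀ v, π v ∈ B ↔ v ∈ B)) := by
  classical
  have hmemB : ∀ x, x ∈ B ↔ x ∉ A := by
    intro x
    constructor
    · intro hx hxA
      exact Finset.disjoint_left.mp hdisj hxA hx
    · intro hx
      have h := Finset.mem_univ x
      rw [← hpart, Finset.mem_union] at h
      tauto
  have key : ∀ A' B' : Finset V, A' ∪ B' = Finset.univ → Disjoint A' B' →
      (∀ a ∈ A', ∀ b ∈ A', a ≠ b → G.Adj a b) →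
      (∀ a ∈ B', ∀ b ∈ B', ¬ G.Adj a b) → A' = A ∧ B' = B := by
    intro A' B' hpart' hdisj' hclique' hindep'
    have hmemB' : ∀ x, x ∈ B' ↔ x ∉ A' := by
      intro x
      constructor
      · intro hx hxA
        exact Finset.disjoint_left.mp hdisj' hxA hx
      · intro hx
        have h := Finset.mem_univ x
        rw [← hpart', Finset.mem_union] at h
        tauto
    have hAA : A' = A := by
      by_contra hne
      have hcardA : A'.card ≤ A.card := hA A' hclique'
      have hcardB : B'.card ≤ B.card := hB B' hindep'
      have hc1 : A.card + B.card = Fintype.card V := by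
        rw [← Finset.card_union_of_disjoint hdisj, hpart, Finset.card_univ]
      have hc2 : A'.card + B'.card = Fintype.card V := by
        rw [← Finset.card_union_of_disjoint hdisj', hpart', Finset.card_univ]
      have hcA : A'.card = A.card := by omega
      obtain ⟨b, hb⟩ : (A' \ A).Nonempty := by
        rw [Finset.sdiff_nonempty]
        intro hsub
        exact hne (Finset.eq_of_subset_of_card_le hsub (le_of_eq hcA.symm))
      obtain ⟨a, ha⟩ : (A \ A').Nonempty := by
        rw [Finset.sdiff_nonempty]
        intro hsub
        exact hne (Finset.eq_of_subset_of_card_le hsub hcardA).symm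
      rw [Finset.mem_sdiff] at hb ha
      have hbB : b ∈ B := (hmemB b).mpr hb.2
      have haB' : a ∈ B' := (hmemB' a).mpr ha.2
      by_cases hadj : G.Adj a b
      · -- then insert b A is a clique larger than A
        have hcl : ∀ x ∈ insert b A, ∀ y ∈ insert b A, x ≠ y → G.Adj x y := by
          have hbA : ∀ z ∈ A, z ≠ b → G.Adj b z := by
            intro z hz hzb
            by_cases hza : z = a
            · subst hza; exact hadj.symm
            · have hzA' : z ∈ A' := by
                by_contra hzn
                have hzB' : z ∈ B' := (hmemB' z).mpr hzn
                exact hindep' z hzB' a haB' (hclique z hz a ha.1 hza)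
              exact hclique' b hb.1 z hzA' (Ne.symm hzb)
          intro x hx y hy hxy
          rw [Finset.mem_insert] at hx hy
          rcases hx with rfl | hx
          · rcases hy with rfl | hy
            · exact absurd rfl hxy
            · exact hbA y hy (Ne.symm hxy)
          · rcases hy with rfl | hy
            · exact (hbA x hx hxy).symm
            · exact hclique x hx y hy hxy
        have hle := hA (insert b A) hcl
        rw [Finset.card_insert_of_notMem hb.2] at hle
        omega
      · -- then insert a B is an independent set larger than B
        have hind : ∀ x ∈ insert a B, ∀ y ∈ insert a B, ¬ G.Adj x y := by
          have haBz : ∀ z ∈ B, ¬ G.Adj a z := by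
            intro z hz
            by_cases hzb : z = b
            · subst hzb; exact hadj
            · have hzB' : z ∈ B' := by
                rw [hmemB']
                intro hzA'
                exact hindep z hz b hbB (hclique' z hzA' b hb.1 hzb)
              exact hindep' a haB' z hzB'
          intro x hx y hy
          rw [Finset.mem_insert] at hx hy
          rcases hx with rfl | hx
          · rcases hy with rfl | hy
            · exact G.loopless.irrefl _
            · exact haBz y hy
          · rcases hy with rfl | hy
            · intro h; exact haBz x hx h.symm
            · exact hindep x hx y hy
        have hle := hB (insert a B) hind
        have haB : a ∉ B := fun h => (hmemB a).mp h ha.1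
        rw [Finset.card_insert_of_notMem haB] at hle
        omega
    have hBB : B' = B := by
      ext x
      rw [hmemB, hmemB', hAA]
    exact ⟨hAA, hBB⟩
  refine ⟨key, ?_⟩
  intro π
  have hinj : Function.Injective π := π.toEquiv.injective
  have h1 : A.image π ∪ B.image π = Finset.univ := by
    rw [← Finset.image_union, hpart]
    exact Finset.image_univ_of_surjective π.toEquiv.surjective
  have h2 : Disjoint (A.image π) (B.image π) := by
    rw [Finset.disjoint_image hinj]
    exact hdisj
  have h3 : ∀ a ∈ A.image π, ∀ b ∈ A.image π, a ≠ b → G.Adj a b := by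
    intro a ha b hb hab
    obtain ⟨x, hx, rfl⟩ := Finset.mem_image.mp ha
    obtain ⟨y, hy, rfl⟩ := Finset.mem_image.mp hb
    exact π.map_adj_iff.mpr (hclique x hx y hy (fun h => hab (congrArg π h)))
  have h4 : ∀ a ∈ B.image π, ∀ b ∈ B.image π, ¬ G.Adj a b := by
    intro a ha b hb
    obtain ⟨x, hx, rfl⟩ := Finset.mem_image.mp ha
    obtain ⟨y, hy, rfl⟩ := Finset.mem_image.mp hb
    rw [π.map_adj_iff]
    exact hindep x hx y hy
  obtain ⟨hAimg, hBimg⟩ := key _ _ h1 h2 h3 h4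
  constructor
  · intro v
    constructor
    · intro hv
      rw [← hAimg] at hv
      obtain ⟨w, hw, hwv⟩ := Finset.mem_image.mp hv
      exact (hinj hwv) ▸ hw
    · intro hv
      rw [← hAimg]
      exact Finset.mem_image_of_mem π hv
  · intro v
    constructor
    · intro hv
      rw [← hBimg] at hv
      obtain ⟨w, hw, hwv⟩ := Finset.mem_image.mp hv
      exact (hinj hwv) ▸ hw
    · intro hv
      rw [← hBimg]
      exact Finset.mem_image_of_mem π hv
end

section
/- Let G = mH be the disjoint union of m copies of a connected graph H, and let D(H,c) denote the number of inequivalent distinguishing c-labelings of H. Then D(G) = min { c : D(H,c) ≥ m }. -/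
/-- A `c`-labeling `φ` of the vertices of `G` is distinguishing if the only automorphism of `G`
preserving all labels is the identity. -/
def IsDistinguishing {V : Type*} (G : SimpleGraph V) {c : ℕ} (φ : V → Fin c) : Prop :=
  ∀ π : G ≃g G, (∀ v, φ (π v) = φ v) → ∀ v, π v = v

/-- The distinguishing number of a graph. -/
noncomputable def distNum {V : Type*} (G : SimpleGraph V) : ℕ :=
  sInf {c : ℕ | ∃ φ : V → Fin c, IsDistinguishing G φ}

/-- Two distinguishing `c`-labelings of `G` are equivalent if some automorphism of `G`
carries one to the other. -/
def distLabelSetoid {V : Type*} (G : SimpleGraph V) (c : ℕ) :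
    Setoid {φ : V → Fin c // IsDistinguishing G φ} where
  r φ ψ := ∃ π : G ≃g G, ∀ v, ψ.1 v = φ.1 (π v)
  iseqv := by
    constructor
    · intro φ; exact ⟨SimpleGraph.Iso.refl, fun v => rfl⟩
    · rintro φ ψ ⟨π, h⟩
      refine ⟨π.symm, fun v => ?_⟩
      rw [h (π.symm v), π.apply_symm_apply v]
    · rintro φ ψ χ ⟨π, h⟩ ⟨σ, h2⟩
      exact ⟨σ.trans π, fun v => by rw [h2 v, h (σ v)]; rfl⟩

/-- The number of inequivalent distinguishing `c`-labelings of a graph, denoted `D(G,c)`. -/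
noncomputable def distLabelCount {V : Type*} (G : SimpleGraph V) (c : ℕ) : ℕ :=
  Nat.card (Quotient (distLabelSetoid G c))

/-- The disjoint union `mH` of `m` copies of a graph `H`. -/
def copies {V : Type*} (m : ℕ) (H : SimpleGraph V) : SimpleGraph (Fin m × V) where
  Adj x y := x.1 = y.1 ∧ H.Adj x.2 y.2
  symm := ⟨by rintro x y ⟨h1, h2⟩; exact ⟨h1.symm, h2.symm⟩⟩
  loopless := ⟨by rintro x ⟨-, h⟩; exact H.loopless.irrefl _ h⟩

section aux
variable {V : Type*} {H : SimpleGraph V} {m : ℕ}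

/-- Build an automorphism of `copies m H` from a permutation of copies and an
automorphism of `H` on each copy. -/
def copiesIso (σ : Equiv.Perm (Fin m)) (τ : Fin m → (H ≃g H)) :
    copies m H ≃g copies m H where
  toFun x := (σ x.1, τ x.1 x.2)
  invFun x := (σ.symm x.1, (τ (σ.symm x.1)).symm x.2)
  left_inv x := by simp
  right_inv x := by simp
  map_rel_iff' := by
    rintro ⟨i, v⟩ ⟨j, w⟩
    show (copies m H).Adj (σ i, τ i v) (σ j, τ j w) ↔ (copies m H).Adj (i, v) (j, w)
    constructor
    · rintro ⟨h1, h2⟩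
      have hij : i = j := σ.injective h1
      subst hij
      exact ⟨rfl, (τ i).map_adj_iff.mp h2⟩
    · rintro ⟨h1, h2⟩
      obtain rfl : i = j := h1
      exact ⟨rfl, (τ i).map_adj_iff.mpr h2⟩

lemma fst_const (hconn : H.Connected) (π : copies m H ≃g copies m H) (i : Fin m)
    (v w : V) : (π (i, v)).1 = (π (i, w)).1 := by
  obtain ⟨p⟩ := hconn.preconnected v w
  induction p with
  | nil => rfl
  | @cons a b c h p ih =>
      exact (π.map_adj_iff.mpr (⟨rfl, h⟩ : (copies m H).Adj (i, a) (i, b))).1.trans ih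

variable (hconn : H.Connected)

noncomputable def sigFun (π : copies m H ≃g copies m H) (i : Fin m) : Fin m :=
  (π (i, Classical.arbitrary (α := V) (h := hconn.nonempty))).1

lemma sigFun_eq (π : copies m H ≃g copies m H) (i : Fin m) (v : V) :
    (π (i, v)).1 = sigFun hconn π i :=
  fst_const hconn π i v _

lemma sigFun_inv (π : copies m H ≃g copies m H) (i : Fin m) :
    sigFun hconn π.symm (sigFun hconn π i) = i := by
  set v₀ := Classical.arbitrary (α := V) (h := hconn.nonempty)
  have h1 : (π.symm (sigFun hconn π i, v₀)).1 = (π.symm (sigFun hconn π i, (π (i, v₀)).2)).1 :=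
    fst_const hconn π.symm _ _ _
  have h2 : ((sigFun hconn π i, (π (i, v₀)).2) : Fin m × V) = π (i, v₀) := rfl
  show (π.symm (sigFun hconn π i, v₀)).1 = i
  rw [h1, h2, π.symm_apply_apply]

/-- The permutation of copies induced by an automorphism of `copies m H`. -/
noncomputable def sigPerm (π : copies m H ≃g copies m H) : Equiv.Perm (Fin m) where
  toFun := sigFun hconn π
  invFun := sigFun hconn π.symm
  left_inv i := sigFun_inv hconn π i
  right_inv i := by
    have := sigFun_inv hconn π.symm i
    rwa [show π.symm.symm = π from rfl] at this

/-- The automorphism of `H` induced on copy `i`. -/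
noncomputable def tauIso (π : copies m H ≃g copies m H) (i : Fin m) : H ≃g H where
  toFun v := (π (i, v)).2
  invFun v := (π.symm (sigFun hconn π i, v)).2
  left_inv v := by
    have h2 : ((sigFun hconn π i, (π (i, v)).2) : Fin m × V) = π (i, v) :=
      Prod.ext (sigFun_eq hconn π i v).symm rfl
    show (π.symm (sigFun hconn π i, (π (i, v)).2)).2 = v
    rw [h2, π.symm_apply_apply]
  right_inv v := by
    have h1 : (π.symm (sigFun hconn π i, v)).1 = i := by
      have := fst_const hconn π.symm (sigFun hconn π i) v
        (Classical.arbitrary (α := V) (h := hconn.nonempty))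
      rw [this]; exact sigFun_inv hconn π i
    have h2 : ((i, (π.symm (sigFun hconn π i, v)).2) : Fin m × V)
        = π.symm (sigFun hconn π i, v) := Prod.ext h1.symm rfl
    show (π (i, (π.symm (sigFun hconn π i, v)).2)).2 = v
    rw [h2, π.apply_symm_apply]
  map_rel_iff' := by
    intro v w
    have key : ∀ a b : V, (copies m H).Adj (π (i, a)) (π (i, b)) ↔ H.Adj a b := by
      intro a b
      rw [π.map_adj_iff]
      constructor
      · rintro ⟨-, h⟩; exact h
      · intro h; exact ⟨rfl, h⟩
    constructor
    · intro h
      have : (copies m H).Adj (π (i, v)) (π (i, w)) := ⟨fst_const hconn π i v w, h⟩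
      exact (key v w).mp this
    · intro h
      exact ((key v w).mpr h).2

lemma pi_eq (π : copies m H ≃g copies m H) (i : Fin m) (v : V) :
    π (i, v) = (sigPerm hconn π i, tauIso hconn π i v) :=
  Prod.ext (sigFun_eq hconn π i v) rfl

end aux

/-- For a connected finite graph `H` and `m ≥ 1`, the distinguishing number of the disjoint
union of `m` copies of `H` is the least `c` with at least `m` inequivalent distinguishing
`c`-labelings of `H`. -/
theorem distNum_copies {V : Type*} [Fintype V] (H : SimpleGraph V)
    (hconn : H.Connected) (m : ℕ) (hm : 1 ≤ m) :
    distNum (copies m H) = sInf {c : ℕ | m ≤ distLabelCount H c} := by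
  have hne : Nonempty V := hconn.nonempty
  set v₀ : V := Classical.arbitrary V
  have hset : {c : ℕ | ∃ φ : Fin m × V → Fin c, IsDistinguishing (copies m H) φ}
      = {c : ℕ | m ≤ distLabelCount H c} := by
    ext c
    simp only [Set.mem_setOf_eq]
    constructor
    · rintro ⟨Φ, hΦ⟩
      -- each copy's restriction is a distinguishing labeling of H
      have hdist : ∀ i : Fin m, IsDistinguishing H (fun v => Φ (i, v)) := by
        intro i τ hτ v
        set PP : copies m H ≃g copies m H :=
          copiesIso (Equiv.refl _) (fun j => if j = i then τ else SimpleGraph.Iso.refl)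
        have hlab : ∀ x, Φ (PP x) = Φ x := by
          rintro ⟨j, w⟩
          show Φ (j, (if j = i then τ else SimpleGraph.Iso.refl) w) = Φ (j, w)
          by_cases h : j = i
          · subst h; simp only [eq_self_iff_true, if_true]; exact hτ w
          · simp only [if_neg h]; rfl
        have := hΦ PP hlab (i, v)
        have h2 := congrArg Prod.snd this
        simpa [PP, copiesIso] using h2
      set ψ : Fin m → {φ : V → Fin c // IsDistinguishing H φ} :=
        fun i => ⟨fun v => Φ (i, v), hdist i⟩
      have hinj : Function.Injective
          (fun i => Quotient.mk (distLabelSetoid H c) (ψ i)) := by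
        intro i j hij
        by_contra hne'
        obtain ⟨τ, hτ⟩ := Quotient.exact hij
        -- hτ : ∀ v, (ψ j).1 v = (ψ i).1 (τ v), i.e. Φ (j, v) = Φ (i, τ v)
        set PP : copies m H ≃g copies m H :=
          copiesIso (Equiv.swap i j)
            (fun k => if k = i then τ.symm else if k = j then τ else SimpleGraph.Iso.refl)
        have hlab : ∀ x, Φ (PP x) = Φ x := by
          rintro ⟨k, w⟩
          show Φ (Equiv.swap i j k,
            (if k = i then τ.symm else if k = j then τ else SimpleGraph.Iso.refl) w) = Φ (k, w)
          by_cases h1 : k = i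
          · subst h1
            simp only [eq_self_iff_true, if_true, Equiv.swap_apply_left]
            have := hτ (τ.symm w)
            simp only [ψ] at this
            rw [this]
            congr 1
            exact congrArg _ (τ.apply_symm_apply w)
          · by_cases h2 : k = j
            · subst h2
              simp only [if_neg h1, eq_self_iff_true, if_true, Equiv.swap_apply_right]
              exact (hτ w).symm
            · simp only [if_neg h1, if_neg h2, Equiv.swap_apply_of_ne_of_ne h1 h2]
              rfl
        have := hΦ PP hlab (i, v₀)
        have h1 := congrArg Prod.fst this
        have h2 : Equiv.swap i j i = i := h1
        rw [Equiv.swap_apply_left] at h2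
        exact hne' h2.symm
      have := Nat.card_le_card_of_injective _ hinj
      simpa [distLabelCount] using this
    · intro hc
      haveI : Finite (Quotient (distLabelSetoid H c)) := Quotient.finite _
      haveI : Fintype (Quotient (distLabelSetoid H c)) := Fintype.ofFinite _
      have hcard : m ≤ Fintype.card (Quotient (distLabelSetoid H c)) := by
        rwa [← Nat.card_eq_fintype_card]
      obtain ⟨e⟩ : Nonempty (Fin m ↪ Quotient (distLabelSetoid H c)) :=
        Function.Embedding.nonempty_of_card_le (by simpa using hcard)
      set ψ : Fin m → {φ : V → Fin c // IsDistinguishing H φ} := fun i => (e i).out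
      have hout : ∀ i, Quotient.mk (distLabelSetoid H c) (ψ i) = e i :=
        fun i => Quotient.out_eq _
      refine ⟨fun x => (ψ x.1).1 x.2, ?_⟩
      intro π hπ
      have hfix : ∀ i : Fin m, sigPerm hconn π i = i := by
        intro i
        have hr : ∀ v, (ψ i).1 v = (ψ (sigPerm hconn π i)).1 (tauIso hconn π i v) := by
          intro v
          have := hπ (i, v)
          rw [pi_eq hconn π i v] at this
          exact this.symm
        have hq : Quotient.mk (distLabelSetoid H c) (ψ (sigPerm hconn π i))
            = Quotient.mk (distLabelSetoid H c) (ψ i) :=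
          Quotient.sound ⟨tauIso hconn π i, hr⟩
        have := e.injective (((hout _).symm.trans hq).trans (hout i))
        exact this
      rintro ⟨i, v⟩
      rw [pi_eq hconn π i v, hfix i]
      have hr : ∀ w, (ψ i).1 (tauIso hconn π i w) = (ψ i).1 w := by
        intro w
        have := hπ (i, w)
        rw [pi_eq hconn π i w, hfix i] at this
        exact this
      have := (ψ i).2 (tauIso hconn π i) hr v
      rw [this]
  show sInf _ = _
  rw [show {c : ℕ | ∃ φ : Fin m × V → Fin c, IsDistinguishing (copies m H) φ}
    = {c : ℕ | m ≤ distLabelCount H c} from hset]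
end

section
/- For p ≥ 1 and q ≥ 2, the distinguishing number of S(p,q) is min { c : c · C(c,p) ≥ q }, where S(p,q) is the graph consisting of q disjoint stars K_{1,p} whose centers are made pairwise adjacent. -/
/-- The graph `S(p,q)`: `q` disjoint stars `K_{1,p}` whose centers are made pairwise
adjacent.  `Sum.inl i` is the `i`-th center, `Sum.inr (i, k)` the `k`-th leaf of star `i`. -/
def starsGraph (p q : ℕ) : SimpleGraph (Fin q ⊕ Fin q × Fin p) where
  Adj x y := match x, y with
    | .inl i, .inl j => i ≠ j
    | .inl i, .inr z => i = z.1
    | .inr z, .inl i => z.1 = i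
    | .inr _, .inr _ => False
  symm := by
    constructor
    rintro (i | z) (j | w) h
    · exact h.symm
    · exact h.symm
    · exact h.symm
    · exact h
  loopless := by
    constructor
    rintro (i | z) h
    · exact h rfl
    · exact h

namespace StarsAux

variable {p q : ℕ}

/-- wreath-type automorphism of `starsGraph`. -/
def wreath (σ : Equiv.Perm (Fin q)) (τ : Fin q → Equiv.Perm (Fin p)) :
    starsGraph p q ≃g starsGraph p q where
  toEquiv := Equiv.sumCongr σ (Equiv.prodShear σ τ)
  map_rel_iff' := by
    rintro (i | ⟨i, k⟩) (j | ⟨j, m⟩) <;>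
      simp [starsGraph, Equiv.sumCongr, Equiv.prodShear]

lemma eq_of_adj_inr {z : Fin q × Fin p} {x : Fin q ⊕ Fin q × Fin p}
    (h : (starsGraph p q).Adj (.inr z) x) : x = .inl z.1 := by
  cases x with
  | inl j => rw [show z.1 = j from h]
  | inr w => exact h.elim

lemma pi_inl (hp : 1 ≤ p) (hq : 2 ≤ q) (π : starsGraph p q ≃g starsGraph p q) (i : Fin q) :
    ∃ j : Fin q, π (.inl i) = .inl j := by
  cases hπ : π (Sum.inl i) with
  | inl j => exact ⟨j, rfl⟩
  | inr z =>
    have : Nontrivial (Fin q) := Fin.nontrivial_iff_two_le.mpr hq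
    obtain ⟨j, hj⟩ := exists_ne i
    have h1 : (starsGraph p q).Adj (π (.inl i)) (π (.inl j)) :=
      π.map_rel_iff.mpr (show i ≠ j from hj.symm)
    have h2 : (starsGraph p q).Adj (π (.inl i)) (π (.inr (i, ⟨0, hp⟩))) :=
      π.map_rel_iff.mpr (show i = i from rfl)
    rw [hπ] at h1 h2
    have e1 := eq_of_adj_inr h1
    have e2 := eq_of_adj_inr h2
    have := π.injective (e1.trans e2.symm)
    simp at this

lemma pi_inr (hp : 1 ≤ p) (hq : 2 ≤ q) (π : starsGraph p q ≃g starsGraph p q)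
    (z : Fin q × Fin p) : ∃ w : Fin q × Fin p, π (.inr z) = .inr w := by
  cases hπ : π (Sum.inr z) with
  | inr w => exact ⟨w, rfl⟩
  | inl j =>
    obtain ⟨j', hj'⟩ := pi_inl hp hq π.symm j
    have : (Sum.inr z : Fin q ⊕ Fin q × Fin p) = Sum.inl j' := by
      rw [← hj', ← hπ]
      exact (π.symm_apply_apply _).symm
    cases this


variable {p q : ℕ}
@[simp] lemma wreath_inl (σ : Equiv.Perm (Fin q)) (τ : Fin q → Equiv.Perm (Fin p)) (i : Fin q) :
    wreath σ τ (Sum.inl i) = Sum.inl (σ i) := rfl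
@[simp] lemma wreath_inr (σ : Equiv.Perm (Fin q)) (τ : Fin q → Equiv.Perm (Fin p))
    (z : Fin q × Fin p) : wreath σ τ (Sum.inr z) = Sum.inr (σ z.1, τ z.1 z.2) := rfl

theorem exists_distinguishing {p q : ℕ} (hp : 1 ≤ p) (hq : 2 ≤ q) {c : ℕ}
    (hc : q ≤ c * c.choose p) :
    ∃ φ : (Fin q ⊕ Fin q × Fin p) → Fin c, IsDistinguishing (starsGraph p q) φ := by
  classical
  have hcard : Fintype.card (Fin q) ≤
      Fintype.card (Fin c × {s : Finset (Fin c) // s.card = p}) := by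
    simpa using hc
  obtain ⟨f⟩ := Function.Embedding.nonempty_of_card_le hcard
  set g : Fin q → Fin p → Fin c :=
    fun i k => (f i).2.1.orderEmbOfFin (f i).2.2 k with hg
  refine ⟨Sum.elim (fun i => (f i).1) (fun z => g z.1 z.2), ?_⟩
  intro π hcol
  choose σ hσ using pi_inl hp hq π
  choose w hw using pi_inr hp hq π
  -- each leaf of star i goes to a leaf of star σ i
  have hw1 : ∀ z : Fin q × Fin p, (w z).1 = σ z.1 := by
    intro z
    have hadj : (starsGraph p q).Adj (π (.inr z)) (π (.inl z.1)) :=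
      π.map_rel_iff.mpr (show z.1 = z.1 from rfl)
    rw [hw z, hσ z.1] at hadj
    exact hadj
  have hstar : ∀ i : Fin q, σ i = i := by
    intro i
    have hfst : (f (σ i)).1 = (f i).1 := by
      have := hcol (.inl i)
      rw [hσ i] at this
      simpa using this
    have hsub : (f i).2.1 ⊆ (f (σ i)).2.1 := by
      intro x hx
      have : x ∈ Set.range ((f i).2.1.orderEmbOfFin (f i).2.2) := by
        rw [Finset.range_orderEmbOfFin]; exact hx
      obtain ⟨k, hk⟩ := this
      have hcolk := hcol (.inr (i, k))
      rw [hw (i, k)] at hcolk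
      have h1 : g (w (i, k)).1 (w (i, k)).2 = g i k := hcolk
      rw [hw1 (i, k)] at h1
      have : g (σ i) (w (i, k)).2 = x := h1.trans hk
      rw [← this]
      exact Finset.orderEmbOfFin_mem _ _ _
    have hsnd : (f (σ i)).2.1 = (f i).2.1 :=
      (Finset.eq_of_subset_of_card_le hsub
        (by rw [(f (σ i)).2.2, (f i).2.2])).symm
    have : f (σ i) = f i := Prod.ext hfst (Subtype.ext hsnd)
    exact f.injective this
  intro v
  cases v with
  | inl i => rw [hσ i, hstar i]
  | inr z =>
    obtain ⟨i, k⟩ := z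
    rw [hw (i, k)]
    have h1 : (w (i, k)).1 = i := (hw1 (i, k)).trans (hstar i)
    have hcolk := hcol (.inr (i, k))
    rw [hw (i, k)] at hcolk
    have h2 : g (w (i, k)).1 (w (i, k)).2 = g i k := hcolk
    rw [h1] at h2
    have h3 : (w (i, k)).2 = k := by
      have := ((f i).2.1.orderEmbOfFin (f i).2.2).injective h2
      exact this
    rw [show w (i, k) = (i, k) from Prod.ext h1 h3]



theorem le_of_distinguishing {p q : ℕ} (hp : 1 ≤ p) (hq : 2 ≤ q) {c : ℕ}
    (φ : (Fin q ⊕ Fin q × Fin p) → Fin c)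
    (hφ : IsDistinguishing (starsGraph p q) φ) : q ≤ c * c.choose p := by
  classical
  -- leaves of each star get pairwise distinct colors
  have hleaf : ∀ i : Fin q, Function.Injective (fun k : Fin p => φ (.inr (i, k))) := by
    intro i k k' hkk
    by_contra hne
    set π := wreath (p := p) (q := q) 1
      (fun j => if j = i then Equiv.swap k k' else 1) with hπdef
    have hcol : ∀ v, φ (π v) = φ v := by
      rintro (j | ⟨j, m⟩)
      · rw [hπdef, wreath_inl]; rfl
      · rw [hπdef, wreath_inr]
        simp only [Equiv.Perm.one_apply]
        split
        · next h =>
          subst h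
          rcases eq_or_ne m k with rfl | hmk
          · rw [Equiv.swap_apply_left]; exact hkk.symm
          rcases eq_or_ne m k' with rfl | hmk'
          · rw [Equiv.swap_apply_right]; exact hkk
          · rw [Equiv.swap_apply_of_ne_of_ne hmk hmk']
        · rfl
    have hfix := hφ π hcol (.inr (i, k))
    have hπk : π (Sum.inr (i, k)) = Sum.inr (i, k') := by
      rw [hπdef, wreath_inr]
      simp [Equiv.swap_apply_left]
    rw [hfix] at hπk
    exact hne (by simpa using hπk)
  -- the signature map is injective
  set sig : Fin q → Fin c × {s : Finset (Fin c) // s.card = p} :=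
    fun i => (φ (.inl i),
      ⟨Finset.univ.image (fun k : Fin p => φ (.inr (i, k))), by
        rw [Finset.card_image_of_injective _ (hleaf i), Finset.card_univ, Fintype.card_fin]⟩)
    with hsig
  have hsiginj : Function.Injective sig := by
    intro i j hij
    by_contra hne
    have hfst : φ (.inl j) = φ (.inl i) := congrArg Prod.fst hij |>.symm
    have hsnd : Finset.univ.image (fun k : Fin p => φ (.inr (i, k))) =
        Finset.univ.image (fun k : Fin p => φ (.inr (j, k))) :=
      congrArg (fun x => (Prod.snd x : {s : Finset (Fin c) // s.card = p}).1) hij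
    -- matching permutation τ₀ on leaves
    have hex : ∀ k : Fin p, ∃ m : Fin p, φ (.inr (j, m)) = φ (.inr (i, k)) := by
      intro k
      have : φ (.inr (i, k)) ∈ Finset.univ.image (fun k : Fin p => φ (.inr (j, k))) := by
        rw [← hsnd]
        exact Finset.mem_image_of_mem _ (Finset.mem_univ k)
      obtain ⟨m, _, hm⟩ := Finset.mem_image.mp this
      exact ⟨m, hm⟩
    choose t ht using hex
    have htinj : Function.Injective t := by
      intro k k' hkk
      apply hleaf i
      show φ (Sum.inr (i, k)) = φ (Sum.inr (i, k'))
      rw [← ht k, ← ht k', hkk]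
    have htbij : Function.Bijective t := (Finite.injective_iff_bijective).mp htinj
    set τ₀ : Equiv.Perm (Fin p) := Equiv.ofBijective t htbij with hτ₀
    have hτ₀app : ∀ k, τ₀ k = t k := fun k => by rw [hτ₀]; rfl
    have hback : ∀ m : Fin p, φ (.inr (i, τ₀.symm m)) = φ (.inr (j, m)) := by
      intro m
      have := ht (τ₀.symm m)
      rw [← hτ₀app, Equiv.apply_symm_apply] at this
      exact this.symm
    set π := wreath (p := p) (q := q) (Equiv.swap i j)
      (fun m => if m = i then τ₀ else if m = j then τ₀.symm else 1) with hπdef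
    have hcol : ∀ v, φ (π v) = φ v := by
      rintro (m | ⟨m, k⟩)
      · rw [hπdef, wreath_inl]
        rcases eq_or_ne m i with rfl | hmi
        · rw [Equiv.swap_apply_left]; exact hfst
        rcases eq_or_ne m j with rfl | hmj
        · rw [Equiv.swap_apply_right]; exact hfst.symm
        · rw [Equiv.swap_apply_of_ne_of_ne hmi hmj]
      · rw [hπdef, wreath_inr]
        rcases eq_or_ne m i with rfl | hmi
        · rw [Equiv.swap_apply_left, if_pos rfl]
          exact ht k
        rcases eq_or_ne m j with rfl | hmj
        · rw [Equiv.swap_apply_right, if_neg hmi, if_pos rfl]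
          exact hback k
        · rw [Equiv.swap_apply_of_ne_of_ne hmi hmj, if_neg hmi, if_neg hmj]
          rfl
    have hfix := hφ π hcol (.inl i)
    rw [hπdef, wreath_inl, Equiv.swap_apply_left] at hfix
    exact hne (Sum.inl.inj hfix).symm
  have := Fintype.card_le_of_injective sig hsiginj
  simpa using this


end StarsAux

/-- For `p ≥ 1`, `q ≥ 2`, the distinguishing number of `S(p,q)` is
`min { c : c · C(c,p) ≥ q }`. -/
theorem distNum_starsGraph (p q : ℕ) (hp : 1 ≤ p) (hq : 2 ≤ q) :
    distNum (starsGraph p q) = sInf {c : ℕ | q ≤ c * c.choose p} := by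
  have hset : {c : ℕ | ∃ φ : (Fin q ⊕ Fin q × Fin p) → Fin c,
      IsDistinguishing (starsGraph p q) φ} = {c : ℕ | q ≤ c * c.choose p} := by
    ext c
    exact ⟨fun ⟨φ, hφ⟩ => StarsAux.le_of_distinguishing hp hq φ hφ,
      fun hc => StarsAux.exists_distinguishing hp hq hc⟩
  rw [distNum, hset]
end

section
/- Let G be a split graph with KS-partition (A,B), H a graph disjoint from G, and G* = (G,A,B) ∘ H the composition: V(G*) = V(G) ∪ V(H), E(G*) = E(G) ∪ E(H) ∪ { uv : u ∈ A, v ∈ V(H) }. There exists an automorphism of G* mapping some u ∈ V(G) to some v ∈ V(H) if and only if either (i) u ∈ A with deg_G(u) = |A| - 1 and v is a dominant vertex of H (adjacent to all other vertices of H), or (ii) u ∈ B with deg_G(u) = |A| and v is an isolated vertex of H. -/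
/-- The Tyshkevich composition `(G,A,B) ∘ H`: take disjoint copies of `G` and `H` and join
every vertex of `A` to every vertex of `H`. -/
def compose {V₁ V₂ : Type*} (G : SimpleGraph V₁) (A : Finset V₁) (H : SimpleGraph V₂) :
    SimpleGraph (V₁ ⊕ V₂) where
  Adj x y := match x, y with
    | .inl u, .inl v => G.Adj u v
    | .inl u, .inr _ => u ∈ A
    | .inr _, .inl u => u ∈ A
    | .inr u, .inr v => H.Adj u v
  symm := ⟨by
    rintro (u | u) (v | v) h
    · exact G.adj_symm h
    · exact h
    · exact h
    · exact H.adj_symm h⟩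
  loopless := ⟨by
    rintro (u | u) h
    · exact G.irrefl h
    · exact H.irrefl h⟩

section Aux

variable {V₁ V₂ : Type*} (G : SimpleGraph V₁) (A : Finset V₁) (H : SimpleGraph V₂)

@[simp] lemma compose_adj_inl_inl (a b : V₁) :
    (compose G A H).Adj (Sum.inl a) (Sum.inl b) ↔ G.Adj a b := Iff.rfl

@[simp] lemma compose_adj_inl_inr (a : V₁) (b : V₂) :
    (compose G A H).Adj (Sum.inl a) (Sum.inr b) ↔ a ∈ A := Iff.rfl

@[simp] lemma compose_adj_inr_inl (a : V₂) (b : V₁) :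
    (compose G A H).Adj (Sum.inr a) (Sum.inl b) ↔ b ∈ A := Iff.rfl

@[simp] lemma compose_adj_inr_inr (a b : V₂) :
    (compose G A H).Adj (Sum.inr a) (Sum.inr b) ↔ H.Adj a b := Iff.rfl

/-- Swapping two vertices whose neighbourhoods agree outside the pair is an automorphism. -/
lemma swap_adj {V : Type*} [DecidableEq V] (G : SimpleGraph V) (a b : V)
    (h : ∀ x, x ≠ a → x ≠ b → (G.Adj a x ↔ G.Adj b x)) :
    ∀ x y, G.Adj (Equiv.swap a b x) (Equiv.swap a b y) ↔ G.Adj x y := by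
  have key : ∀ x y, G.Adj x y → G.Adj (Equiv.swap a b x) (Equiv.swap a b y) := by
    intro x y hxy
    rcases eq_or_ne x a with rfl | hxa
    · rw [Equiv.swap_apply_left]
      rcases eq_or_ne y x with rfl | hya
      · exact absurd hxy (G.irrefl)
      · rcases eq_or_ne y b with rfl | hyb
        · rw [Equiv.swap_apply_right]; exact hxy.symm
        · rw [Equiv.swap_apply_of_ne_of_ne hya hyb]
          exact (h y hya hyb).mp hxy
    · rcases eq_or_ne x b with rfl | hxb
      · rw [Equiv.swap_apply_right]
        rcases eq_or_ne y a with rfl | hya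
        · rw [Equiv.swap_apply_left]; exact hxy.symm
        · rcases eq_or_ne y x with rfl | hyb
          · exact absurd hxy (G.irrefl)
          · rw [Equiv.swap_apply_of_ne_of_ne hya hyb]
            exact (h y hya hyb).mpr hxy
      · rw [Equiv.swap_apply_of_ne_of_ne hxa hxb]
        rcases eq_or_ne y a with rfl | hya
        · rw [Equiv.swap_apply_left]
          exact ((h x hxa hxb).mp hxy.symm).symm
        · rcases eq_or_ne y b with rfl | hyb
          · rw [Equiv.swap_apply_right]
            exact ((h x hxa hxb).mpr hxy.symm).symm
          · rwa [Equiv.swap_apply_of_ne_of_ne hya hyb]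
  intro x y
  constructor
  · intro hxy
    have h2 := key _ _ hxy
    simpa only [Equiv.swap_apply_self] using h2
  · exact key x y

end Aux

/-- Characterization of automorphisms of `G* = (G,A,B) ∘ H` mapping a vertex of `G` to a
vertex of `H`: such an automorphism exists iff either `u ∈ A` with `deg_G u = |A| - 1` and
`v` is dominant in `H`, or `u ∈ B` with `deg_G u = |A|` and `v` is isolated in `H`. -/
theorem aut_compose_cross {V₁ V₂ : Type*} [Fintype V₁] [Fintype V₂] [DecidableEq V₁]
    (G : SimpleGraph V₁) [DecidableRel G.Adj] (H : SimpleGraph V₂)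
    (A B : Finset V₁)
    (hpart : A ∪ B = Finset.univ) (hdisj : Disjoint A B)
    (hclique : ∀ a ∈ A, ∀ b ∈ A, a ≠ b → G.Adj a b)
    (hindep : ∀ a ∈ B, ∀ b ∈ B, ¬ G.Adj a b)
    (u : V₁) (v : V₂) :
    (∃ π : compose G A H ≃g compose G A H, π (Sum.inl u) = Sum.inr v) ↔
      ((u ∈ A ∧ G.degree u = A.card - 1 ∧ ∀ w, w ≠ v → H.Adj v w) ∨
       (u ∈ B ∧ G.degree u = A.card ∧ ∀ w, ¬ H.Adj v w)) := by
  classical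
  set n₂ := Fintype.card V₂ with hn₂
  -- basic cardinality facts
  have hcardU : ∀ (s : Set V₁) (t : Set V₂),
      (Sum.inl '' s ∪ Sum.inr '' t : Set (V₁ ⊕ V₂)).ncard = s.ncard + t.ncard := by
    intro s t
    have hd : Disjoint (Sum.inl '' s) (Sum.inr '' t : Set (V₁ ⊕ V₂)) := by
      rw [Set.disjoint_left]
      rintro _ ⟨a, -, rfl⟩ ⟨b, -, hb⟩
      exact Sum.inl_ne_inr hb.symm
    rw [Set.ncard_union_eq hd (Set.toFinite _) (Set.toFinite _),
      Set.ncard_image_of_injective _ Sum.inl_injective,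
      Set.ncard_image_of_injective _ Sum.inr_injective]
  have hdegG : (G.neighborSet u).ncard = G.degree u := by
    rw [Set.ncard_eq_toFinset_card', ← SimpleGraph.neighborFinset_def]
    rfl
  have hNr : (compose G A H).neighborSet (Sum.inr v)
      = Sum.inl '' (A : Set V₁) ∪ Sum.inr '' (H.neighborSet v) := by
    ext x
    rcases x with a | b <;>
      simp [SimpleGraph.mem_neighborSet, SimpleGraph.adj_comm]
  constructor
  · rintro ⟨π, hπ⟩
    -- equality of neighbourhood cardinalities
    have e := π.mapNeighborSet (Sum.inl u)
    rw [hπ] at e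
    have hc : ((compose G A H).neighborSet (Sum.inl u)).ncard
        = ((compose G A H).neighborSet (Sum.inr v)).ncard := by
      rw [← Nat.card_coe_set_eq, ← Nat.card_coe_set_eq]
      exact Nat.card_congr e
    have hrc : ((compose G A H).neighborSet (Sum.inr v)).ncard
        = A.card + (H.neighborSet v).ncard := by
      rw [hNr, hcardU, Set.ncard_coe_finset]
    have hdlt : (H.neighborSet v).ncard < n₂ := by
      have hss : H.neighborSet v ⊂ Set.univ := by
        rw [Set.ssubset_univ_iff]
        intro h
        have hv : v ∈ H.neighborSet v := by rw [h]; trivial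
        exact H.irrefl hv
      have := Set.ncard_lt_ncard hss (Set.toFinite _)
      simpa [Set.ncard_univ] using this
    have huAB : u ∈ A ∪ B := hpart ▸ Finset.mem_univ u
    rcases Finset.mem_union.mp huAB with huA | huB
    · -- u ∈ A
      left
      have hNl : (compose G A H).neighborSet (Sum.inl u)
          = Sum.inl '' (G.neighborSet u) ∪ Sum.inr '' (Set.univ : Set V₂) := by
        ext x
        rcases x with a | b <;>
          simp [SimpleGraph.mem_neighborSet, huA]
      have hlc : ((compose G A H).neighborSet (Sum.inl u)).ncard = G.degree u + n₂ := by
        rw [hNl, hcardU, hdegG, Set.ncard_univ, Nat.card_eq_fintype_card]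
      have heq : G.degree u + n₂ = A.card + (H.neighborSet v).ncard := by
        rw [← hlc, hc, hrc]
      have hge : A.card - 1 ≤ G.degree u := by
        have hsub : A.erase u ⊆ G.neighborFinset u := by
          intro w hw
          rw [SimpleGraph.mem_neighborFinset]
          exact hclique u huA w (Finset.mem_of_mem_erase hw)
            (Finset.ne_of_mem_erase hw).symm
        have := Finset.card_le_card hsub
        rwa [Finset.card_erase_of_mem huA, SimpleGraph.card_neighborFinset_eq_degree] at this
      have hApos : 1 ≤ A.card := Finset.card_pos.mpr ⟨u, huA⟩
      have hdeg : G.degree u = A.card - 1 := by omega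
      refine ⟨huA, hdeg, ?_⟩
      have hdH : (H.neighborSet v).ncard = n₂ - 1 := by omega
      have hsub : H.neighborSet v ⊆ {v}ᶜ := by
        intro w hw
        simp only [Set.mem_compl_iff, Set.mem_singleton_iff]
        rintro rfl
        exact H.irrefl hw
      have hcompl : ({v}ᶜ : Set V₂).ncard = n₂ - 1 := by
        rw [Set.compl_eq_univ_diff, Set.ncard_diff (Set.subset_univ _) (Set.toFinite _),
          Set.ncard_univ, Set.ncard_singleton, Nat.card_eq_fintype_card]
      have hEq : H.neighborSet v = {v}ᶜ :=
        Set.eq_of_subset_of_ncard_le hsub (by omega) (Set.toFinite _)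
      intro w hw
      have hmem : w ∈ ({v}ᶜ : Set V₂) := by simpa using hw
      rw [← hEq] at hmem
      exact hmem
    · -- u ∈ B
      right
      have hunA : u ∉ A := fun h => (Finset.disjoint_left.mp hdisj h) huB
      have hNl : (compose G A H).neighborSet (Sum.inl u)
          = Sum.inl '' (G.neighborSet u) ∪ Sum.inr '' (∅ : Set V₂) := by
        ext x
        rcases x with a | b <;>
          simp [SimpleGraph.mem_neighborSet, hunA]
      have hlc : ((compose G A H).neighborSet (Sum.inl u)).ncard = G.degree u := by
        rw [hNl, hcardU, hdegG]
        simp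
      have heq : G.degree u = A.card + (H.neighborSet v).ncard := by
        rw [← hlc, hc, hrc]
      have hle : G.degree u ≤ A.card := by
        have hsub : G.neighborFinset u ⊆ A := by
          intro w hw
          rw [SimpleGraph.mem_neighborFinset] at hw
          have hwAB : w ∈ A ∪ B := hpart ▸ Finset.mem_univ w
          rcases Finset.mem_union.mp hwAB with h | h
          · exact h
          · exact absurd hw (hindep u huB w h)
        have := Finset.card_le_card hsub
        rwa [SimpleGraph.card_neighborFinset_eq_degree] at this
      have hd0 : (H.neighborSet v).ncard = 0 := by omega
      have hEq : H.neighborSet v = ∅ := (Set.ncard_eq_zero (Set.toFinite _)).mp hd0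
      refine ⟨huB, by omega, fun w hw => ?_⟩
      have : w ∈ H.neighborSet v := hw
      rw [hEq] at this
      exact this
  · rintro (⟨huA, hdeg, hdom⟩ | ⟨huB, hdeg, hiso⟩)
    · -- swap inl u and inr v
      have hNu : G.neighborFinset u = A.erase u := by
        refine (Finset.eq_of_subset_of_card_le ?_ ?_).symm
        · intro w hw
          rw [SimpleGraph.mem_neighborFinset]
          exact hclique u huA w (Finset.mem_of_mem_erase hw)
            (Finset.ne_of_mem_erase hw).symm
        · rw [SimpleGraph.card_neighborFinset_eq_degree, hdeg,
            Finset.card_erase_of_mem huA]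
      have hAdj : ∀ w, G.Adj u w ↔ (w ∈ A ∧ w ≠ u) := by
        intro w
        rw [← SimpleGraph.mem_neighborFinset, hNu, Finset.mem_erase, and_comm]
      have h : ∀ x, x ≠ Sum.inl u → x ≠ Sum.inr v →
          ((compose G A H).Adj (Sum.inl u) x ↔ (compose G A H).Adj (Sum.inr v) x) := by
        rintro (w | w) h1 h2
        · have hwu : w ≠ u := fun h => h1 (by rw [h])
          simp [hAdj w, hwu, SimpleGraph.adj_comm]
        · have hwv : w ≠ v := fun h => h2 (by rw [h])
          simp [huA, hdom w hwv]
      refine ⟨⟨Equiv.swap (Sum.inl u) (Sum.inr v), ?_⟩, ?_⟩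
      · intro x y
        exact swap_adj _ _ _ h x y
      · exact Equiv.swap_apply_left _ _
    · have hunA : u ∉ A := fun h => (Finset.disjoint_left.mp hdisj h) huB
      have hNu : G.neighborFinset u = A := by
        refine Finset.eq_of_subset_of_card_le ?_ ?_
        · intro w hw
          rw [SimpleGraph.mem_neighborFinset] at hw
          have hwAB : w ∈ A ∪ B := hpart ▸ Finset.mem_univ w
          rcases Finset.mem_union.mp hwAB with h | h
          · exact h
          · exact absurd hw (hindep u huB w h)
        · rw [SimpleGraph.card_neighborFinset_eq_degree, hdeg]
      have hAdj : ∀ w, G.Adj u w ↔ w ∈ A := by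
        intro w
        rw [← SimpleGraph.mem_neighborFinset, hNu]
      have h : ∀ x, x ≠ Sum.inl u → x ≠ Sum.inr v →
          ((compose G A H).Adj (Sum.inl u) x ↔ (compose G A H).Adj (Sum.inr v) x) := by
        rintro (w | w) h1 h2
        · simp [hAdj w]
        · simp [hunA, hiso w]
      refine ⟨⟨Equiv.swap (Sum.inl u) (Sum.inr v), ?_⟩, ?_⟩
      · intro x y
        exact swap_adj _ _ _ h x y
      · exact Equiv.swap_apply_left _ _
end

section
/- If G is a threshold graph, then D(G) equals the size of the largest component in its compact canonical decomposition; equivalently, D(G) equals the maximum over maximal runs of consecutive same-type trivial components in its Tyshkevich canonical decomposition of the run length. In particular, for a threshold graph built by iteratively adding isolated or dominating vertices, D(G) equals the length of the longest run of consecutive additions of the same type (counting the first two vertices appropriately). -/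
/-- The threshold graph built from a starting vertex by successively adding, for each entry of
`l`, a dominating vertex (`true`) or an isolated vertex (`false`).  Vertex `k ≥ 1` corresponds
to `l[k-1]`; two distinct vertices are adjacent iff the later one was added as dominating. -/
def thresholdGraph (l : List Bool) : SimpleGraph (Fin (l.length + 1)) where
  Adj i j := i ≠ j ∧ l.getD (max (i : ℕ) (j : ℕ) - 1) false = true
  symm := ⟨by
    rintro i j ⟨h1, h2⟩
    exact ⟨h1.symm, by rwa [Nat.max_comm]⟩⟩
  loopless := ⟨by rintro i ⟨h, -⟩; exact h rfl⟩

/-- Auxiliary longest-run computation: `prev` is the type of the current run, `cur` its length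
so far, `best` the longest completed run. -/
def maxRunAux : List Bool → Bool → ℕ → ℕ → ℕ
  | [], _, cur, best => max cur best
  | b :: rest, prev, cur, best =>
    if b = prev then maxRunAux rest prev (cur + 1) best
    else maxRunAux rest b 1 (max cur best)

/-- The length of the longest run of consecutive same-type additions in the construction of a
threshold graph, where the initial vertex is counted as part of the first run (so the first
run starts with length 2). -/
def maxRun : List Bool → ℕ
  | [] => 1
  | b :: rest => maxRunAux rest b 2 0

namespace TG

/-! ### The effective type sequence and the explicit vicinal preorder -/

/-- The effective type of vertex `k` (vertex `0` inherits the type of vertex `1`,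
thanks to truncated subtraction). -/
def e (l : List Bool) (k : ℕ) : Bool := l.getD (k - 1) false

/-- Explicit description of the vicinal preorder of `thresholdGraph l`. -/
def Pn (l : List Bool) (u v : ℕ) : Prop :=
  match e l u, e l v with
  | false, true => True
  | true, false => False
  | true, true => ∀ w, v < w → w < u → e l w = true
  | false, false => ∀ w, u < w → w < v → e l w = false

/-- `e` has no change step on `[a,b)`. -/
def Cst (l : List Bool) (a b : ℕ) : Prop := ∀ k, a ≤ k → k < b → e l (k + 1) = e l k

lemma Pn_refl (l : List Bool) (u : ℕ) : Pn l u u := by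
  unfold Pn
  cases hu : e l u <;> simp <;> intro w h1 h2 <;> omega

lemma Pn_total (l : List Bool) {u v : ℕ} (h : ¬ Pn l u v) : Pn l v u := by
  unfold Pn at *
  cases hu : e l u <;> cases hv : e l v <;> rw [hu, hv] at h <;> simp_all
  · obtain ⟨w, h1, h2, h3⟩ := h
    intro w' hw1 hw2
    omega
  · obtain ⟨w, h1, h2, h3⟩ := h
    intro w' hw1 hw2
    omega

lemma Pn_trans (l : List Bool) {a b c : ℕ} (hab : Pn l a b) (hbc : Pn l b c) :
    Pn l a c := by
  unfold Pn at *
  cases ha : e l a <;> cases hb : e l b <;> cases hc : e l c <;>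
      rw [ha, hb] at hab <;> rw [hb, hc] at hbc <;> simp_all
  · intro w h1 h2
    rcases lt_trichotomy w b with h | h | h
    · exact hab w h1 h
    · subst h; exact hb
    · exact hbc w h h2
  · intro w h1 h2
    rcases lt_trichotomy w b with h | h | h
    · exact hbc w h1 h
    · subst h; exact hb
    · exact hab w h h2

lemma cst_const (l : List Bool) {a b : ℕ} (h : Cst l a b) :
    ∀ w, a ≤ w → w ≤ b → e l w = e l a := by
  intro w
  induction w with
  | zero =>
      intro h1 h2
      have : a = 0 := by omega
      rw [this]
  | succ k ih =>
      intro h1 h2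
      rcases Nat.lt_or_ge a (k+1) with hlt | hge
      · rw [h k (by omega) (by omega), ih (by omega) (by omega)]
      · have : a = k + 1 := by omega
        rw [this]

lemma cst_mono (l : List Bool) {a b a' b' : ℕ} (h : Cst l a b) (h1 : a ≤ a') (h2 : b' ≤ b) :
    Cst l a' b' := fun k hk1 hk2 => h k (by omega) (by omega)

lemma cst_glue (l : List Bool) {a b c : ℕ} (h1 : Cst l a b) (h2 : Cst l b c) (hab : a ≤ b) :
    Cst l a c := by
  intro k hk1 hk2
  by_cases h : k < b
  · exact h1 k hk1 h
  · exact h2 k (by omega) hk2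

/-- twins give a constant stretch -/
lemma twin_cst (l : List Bool) {u v : ℕ} (huv : u ≤ v) (h1 : Pn l u v) (h2 : Pn l v u) :
    Cst l u v := by
  unfold Pn at h1 h2
  intro k hk1 hk2
  cases hu : e l u <;> cases hv : e l v <;> rw [hu, hv] at h1 h2 <;> simp_all
  · have ha : e l k = false := by
      rcases Nat.eq_or_lt_of_le hk1 with h | h
      · rw [← h]; exact hu
      · exact h1 k h hk2
    have hb : e l (k+1) = false := by
      rcases Nat.eq_or_lt_of_le (Nat.succ_le_of_lt hk2) with h | h
      · rw [show k+1 = v by omega]; exact hv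
      · exact h1 (k+1) (by omega) h
    rw [ha, hb]
  · have ha : e l k = true := by
      rcases Nat.eq_or_lt_of_le hk1 with h | h
      · rw [← h]; exact hu
      · exact h2 k h hk2
    have hb : e l (k+1) = true := by
      rcases Nat.eq_or_lt_of_le (Nat.succ_le_of_lt hk2) with h | h
      · rw [show k+1 = v by omega]; exact hv
      · exact h2 (k+1) (by omega) h
    rw [ha, hb]

/-- a constant stretch gives twins -/
lemma cst_twin (l : List Bool) {u v : ℕ} (huv : u ≤ v) (h : Cst l u v) :
    Pn l u v ∧ Pn l v u := by
  have hconst := cst_const l h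
  have hv : e l v = e l u := hconst v huv (le_refl v)
  unfold Pn
  cases hu : e l u <;> rw [hu] at hv <;> rw [hv] <;> constructor
  · intro w h1 h2
    rw [hconst w (by omega) (by omega), hu]
  · intro w h1 h2; omega
  · intro w h1 h2; omega
  · intro w h1 h2
    rw [hconst w (by omega) (by omega), hu]

/-! ### The vicinal preorder of the threshold graph -/

lemma adj_iff (l : List Bool) (i j : Fin (l.length + 1)) :
    (thresholdGraph l).Adj i j ↔ i ≠ j ∧ e l (max (i : ℕ) (j : ℕ)) = true := Iff.rfl

lemma e_zero_one (l : List Bool) : e l 0 = e l 1 := rfl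

lemma incl_iff' (l : List Bool) (U V : ℕ) (hU : U ≤ l.length) (hV : V ≤ l.length)
    (hUV : U ≠ V) :
    (∀ W, W ≤ l.length → W ≠ U → W ≠ V →
      e l (max U W) = true → e l (max V W) = true) ↔ Pn l U V := by
  constructor
  · intro hincl
    unfold Pn
    cases hu : e l U <;> cases hv : e l V
    · -- FF
      intro w h1 h2
      by_contra hw
      rw [Bool.not_eq_false] at hw
      have := hincl w (by omega) (by omega) (by omega)
        (by rwa [show max U w = w by omega])
      rw [show max V w = V by omega, hv] at this
      exact Bool.false_ne_true this
    · exact trivial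
    · -- TF : derive False
      exfalso
      rcases Nat.eq_zero_or_pos U with hU0 | hU1
      · subst hU0
        have h1t : e l 1 = true := (e_zero_one l).symm.trans hu
        have hV2 : 2 ≤ V := by
          have hne1 : V ≠ 1 := by
            intro h; rw [h, h1t] at hv; simp at hv
          omega
        have := hincl 1 (by omega) (by omega) (by omega)
          (by rwa [show max 0 1 = 1 by omega])
        rw [show max V 1 = V by omega, hv] at this
        exact Bool.false_ne_true this
      · rcases Nat.eq_zero_or_pos V with hV0 | hV1
        · subst hV0
          have h1f : e l 1 = false := (e_zero_one l).symm.trans hv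
          have hU2 : 2 ≤ U := by
            have hne1 : U ≠ 1 := by
              intro h; rw [h, h1f] at hu; simp at hu
            omega
          have := hincl 1 (by omega) (by omega) (by omega)
            (by rwa [show max U 1 = U by omega])
          rw [show max 0 1 = 1 by omega, h1f] at this
          exact Bool.false_ne_true this
        · have := hincl 0 (by omega) (by omega) (by omega)
            (by rwa [show max U 0 = U by omega])
          rw [show max V 0 = V by omega, hv] at this
          exact Bool.false_ne_true this
    · -- TT
      intro w h1 h2
      by_contra hw
      rw [Bool.not_eq_true] at hw
      have := hincl w (by omega) (by omega) (by omega)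
        (by rwa [show max U w = U by omega])
      rw [show max V w = w by omega, hw] at this
      exact Bool.false_ne_true this
  · -- Pn → incl
    intro hp W hWn hWU hWV hadj
    unfold Pn at hp
    cases hu : e l U <;> cases hv : e l V <;> rw [hu, hv] at hp
    · -- FF
      have hUW : U < W := by
        by_contra h
        rw [show max U W = U by omega, hu] at hadj
        exact Bool.false_ne_true hadj
      rw [show max U W = W by omega] at hadj
      have hVW : V < W := by
        by_contra h
        have : W < V := by omega
        rw [hp W hUW this] at hadj
        exact Bool.false_ne_true hadj
      rwa [show max V W = W by omega]
    · -- FT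
      have hUW : U < W := by
        by_contra h
        rw [show max U W = U by omega, hu] at hadj
        exact Bool.false_ne_true hadj
      rcases Nat.lt_or_ge W V with h | h
      · rwa [show max V W = V by omega]
      · rw [show max U W = W by omega] at hadj
        rwa [show max V W = W by omega]
    · exact absurd hp (by simp)
    · -- TT
      rcases Nat.lt_or_ge W V with h | h
      · rwa [show max V W = V by omega]
      · rw [show max V W = W by omega]
        rcases Nat.lt_or_ge W U with h' | h'
        · exact hp W (by omega) h'
        · rwa [show max U W = W by omega] at hadj

lemma incl_iff (l : List Bool) (u v : Fin (l.length + 1)) (huv : u ≠ v) :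
    (∀ w : Fin (l.length + 1), w ≠ u → w ≠ v →
      (thresholdGraph l).Adj u w → (thresholdGraph l).Adj v w) ↔ Pn l (u : ℕ) (v : ℕ) := by
  have hu := Nat.lt_succ_iff.mp u.isLt
  have hv := Nat.lt_succ_iff.mp v.isLt
  rw [← incl_iff' l (u : ℕ) (v : ℕ) hu hv (fun h => huv (Fin.ext h))]
  constructor
  · intro h W hW hWU hWV hadj
    have h1 := h ⟨W, Nat.lt_succ_of_le hW⟩
      (fun hh => hWU (congrArg Fin.val hh))
      (fun hh => hWV (congrArg Fin.val hh))
      ((adj_iff l u ⟨W, Nat.lt_succ_of_le hW⟩).mpr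
        ⟨fun hh => hWU (congrArg Fin.val hh).symm, hadj⟩)
    exact ((adj_iff l v ⟨W, Nat.lt_succ_of_le hW⟩).mp h1).2
  · intro h w hw1 hw2 hadj
    rw [adj_iff] at hadj ⊢
    refine ⟨fun hh => hw2 hh.symm, ?_⟩
    exact h (w : ℕ) (Nat.lt_succ_iff.mp w.isLt)
      (fun hh => hw1 (Fin.ext hh)) (fun hh => hw2 (Fin.ext hh)) hadj.2

lemma Pn_map (l : List Bool) (π : thresholdGraph l ≃g thresholdGraph l)
    (u v : Fin (l.length + 1)) :
    Pn l ((π u : Fin (l.length + 1)) : ℕ) ((π v : Fin (l.length + 1)) : ℕ) ↔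
      Pn l (u : ℕ) (v : ℕ) := by
  rcases eq_or_ne u v with rfl | huv
  · exact iff_of_true (Pn_refl l _) (Pn_refl l _)
  · have hπuv : π u ≠ π v := fun h => huv (π.toEquiv.injective h)
    rw [← incl_iff l u v huv, ← incl_iff l (π u) (π v) hπuv]
    constructor
    · intro h w hw1 hw2 hadj
      have h1 := h (π w) (fun hh => hw1 (π.toEquiv.injective hh))
        (fun hh => hw2 (π.toEquiv.injective hh)) (π.map_rel_iff.mpr hadj)
      exact π.map_rel_iff.mp h1
    · intro h w hw1 hw2 hadj
      obtain ⟨w', rfl⟩ : ∃ w', π w' = w := ⟨π.symm w, π.apply_symm_apply w⟩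
      have h1 := h w' (fun hh => hw1 (by rw [hh])) (fun hh => hw2 (by rw [hh]))
        (π.map_rel_iff.mp hadj)
      exact π.map_rel_iff.mpr h1

/-- count of vertices vicinally below (or equivalent to) `v` -/
noncomputable def gcount (l : List Bool) (v : Fin (l.length + 1)) : ℕ :=
  Set.ncard {w : Fin (l.length + 1) | Pn l (w : ℕ) (v : ℕ)}

lemma gcount_map (l : List Bool) (π : thresholdGraph l ≃g thresholdGraph l)
    (v : Fin (l.length + 1)) : gcount l (π v) = gcount l v := by
  unfold gcount
  have hset : {w : Fin (l.length + 1) | Pn l (w : ℕ) ((π v : Fin (l.length + 1)) : ℕ)} =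
      (π : Fin (l.length + 1) → Fin (l.length + 1)) ''
        {w : Fin (l.length + 1) | Pn l (w : ℕ) (v : ℕ)} := by
    ext w
    simp only [Set.mem_image, Set.mem_setOf_eq]
    constructor
    · intro h
      refine ⟨π.symm w, ?_, π.apply_symm_apply w⟩
      have h2 := (Pn_map l π (π.symm w) v)
      rw [π.apply_symm_apply] at h2
      exact h2.mp h
    · rintro ⟨x, hx, rfl⟩
      exact (Pn_map l π x v).mpr hx
  rw [hset]
  exact Set.ncard_image_of_injective _ π.injective

lemma gcount_eq_twin (l : List Bool) {u v : Fin (l.length + 1)}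
    (h : gcount l u = gcount l v) :
    Pn l (u : ℕ) (v : ℕ) ∧ Pn l (v : ℕ) (u : ℕ) := by
  have key : ∀ a b : Fin (l.length + 1), Pn l (a : ℕ) (b : ℕ) → ¬ Pn l (b : ℕ) (a : ℕ) →
      gcount l a < gcount l b := by
    intro a b h1 h2
    apply Set.ncard_lt_ncard _ (Set.toFinite _)
    constructor
    · intro w hw
      exact Pn_trans l hw h1
    · intro hsub
      exact h2 (hsub (Pn_refl l (b : ℕ)))
  by_contra hc
  rw [not_and_or] at hc
  rcases hc with hc | hc
  · have h1 := Pn_total l hc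
    have := key v u h1 hc
    omega
  · have h1 := Pn_total l hc
    have := key u v h1 hc
    omega

/-! ### Swap automorphisms from twins -/

def swapIso (l : List Bool) (u v : Fin (l.length + 1)) (huv : u ≠ v)
    (h1 : Pn l (u : ℕ) (v : ℕ)) (h2 : Pn l (v : ℕ) (u : ℕ)) :
    thresholdGraph l ≃g thresholdGraph l := by
  have incl1 := (incl_iff l u v huv).mpr h1
  have incl2 := (incl_iff l v u huv.symm).mpr h2
  have key : ∀ x y : Fin (l.length + 1), (thresholdGraph l).Adj x y →
      (thresholdGraph l).Adj (Equiv.swap u v x) (Equiv.swap u v y) := by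
    intro x y hxy
    rcases eq_or_ne x u with rfl | hxu
    · rw [Equiv.swap_apply_left]
      rcases eq_or_ne y v with rfl | hyv
      · rw [Equiv.swap_apply_right]
        exact hxy.symm
      · rw [Equiv.swap_apply_of_ne_of_ne hxy.ne' hyv]
        exact incl1 y hxy.ne' hyv hxy
    · rcases eq_or_ne x v with rfl | hxv
      · rw [Equiv.swap_apply_right]
        rcases eq_or_ne y u with rfl | hyu
        · rw [Equiv.swap_apply_left]
          exact hxy.symm
        · rw [Equiv.swap_apply_of_ne_of_ne hyu hxy.ne']
          exact incl2 y hxy.ne' hyu hxy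
      · rw [Equiv.swap_apply_of_ne_of_ne hxu hxv]
        rcases eq_or_ne y u with rfl | hyu
        · rw [Equiv.swap_apply_left]
          exact ((incl1 x hxu hxv hxy.symm).symm)
        · rcases eq_or_ne y v with rfl | hyv
          · rw [Equiv.swap_apply_right]
            exact ((incl2 x hxv hxu hxy.symm).symm)
          · rw [Equiv.swap_apply_of_ne_of_ne hyu hyv]
            exact hxy
  exact
    { toEquiv := Equiv.swap u v
      map_rel_iff' := by
        intro x y
        constructor
        · intro h
          have := key _ _ h
          rwa [Equiv.swap_apply_self, Equiv.swap_apply_self] at this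
        · exact key x y }

/-! ### run starts -/

noncomputable def runStart (l : List Bool) (v : ℕ) : ℕ := sInf {a | Cst l a v}

lemma runStart_le (l : List Bool) (v : ℕ) : runStart l v ≤ v :=
  Nat.sInf_le (fun k h1 h2 => by omega)

lemma cst_runStart (l : List Bool) (v : ℕ) : Cst l (runStart l v) v :=
  Nat.sInf_mem (⟨v, fun k h1 h2 => by omega⟩ : {a | Cst l a v}.Nonempty)

lemma runStart_congr (l : List Bool) {u v : ℕ} (huv : u ≤ v) (h : Cst l u v) :
    runStart l u = runStart l v := by
  have h1 : runStart l v ≤ runStart l u :=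
    Nat.sInf_le (cst_glue l (cst_runStart l u) h (runStart_le l u))
  have h2 : runStart l u ≤ runStart l v := by
    apply Nat.sInf_le
    exact cst_mono l (cst_runStart l v) (le_refl _) huv
  omega

/-- virtual sequence of the accumulator state -/
def S (t : List Bool) (prev : Bool) (cur : ℕ) (k : ℕ) : Bool :=
  if k < cur then prev else t.getD (k - cur) false

lemma S_cons_same (t : List Bool) (prev : Bool) (cur k : ℕ) :
    S (prev :: t) prev cur k = S t prev (cur + 1) k := by
  unfold S
  rcases Nat.lt_trichotomy k cur with h | h | h
  · rw [if_pos h, if_pos (by omega)]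
  · subst h
    rw [if_neg (by omega), if_pos (by omega), Nat.sub_self, List.getD_cons_zero]
  · rw [if_neg (by omega), if_neg (by omega),
      show k - cur = (k - (cur + 1)) + 1 by omega, List.getD_cons_succ]

lemma S_cons_new (b₀ : Bool) (t : List Bool) (prev : Bool) (cur k : ℕ) :
    S (b₀ :: t) prev cur (k + cur) = S t b₀ 1 k := by
  unfold S
  rcases Nat.eq_zero_or_pos k with h | h
  · subst h
    rw [if_neg (by omega), if_pos (by omega), Nat.zero_add, Nat.sub_self,
      List.getD_cons_zero]
  · rw [if_neg (by omega), if_neg (by omega),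
      show k + cur - cur = (k - 1) + 1 by omega, List.getD_cons_succ]

lemma le_maxRunAux_best : ∀ (t : List Bool) (prev : Bool) (cur best : ℕ),
    best ≤ maxRunAux t prev cur best := by
  intro t
  induction t with
  | nil => intro prev cur best; simp [maxRunAux]
  | cons b₀ t ih =>
      intro prev cur best
      unfold maxRunAux
      split
      · exact ih prev (cur + 1) best
      · exact le_trans (le_max_right cur best) (ih b₀ 1 (max cur best))

lemma maxRunAux_ub : ∀ (t : List Bool) (prev : Bool) (cur best a b : ℕ),
    1 ≤ cur → b < cur + t.length →
    (∀ k, a ≤ k → k < b → S t prev cur (k + 1) = S t prev cur k) →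
    b + 1 - a ≤ maxRunAux t prev cur best := by
  intro t
  induction t with
  | nil =>
      intro prev cur best a b hcur hb _
      simp only [List.length_nil, Nat.add_zero] at hb
      simp only [maxRunAux]
      omega
  | cons b₀ t ih =>
      intro prev cur best a b hcur hb hconst
      unfold maxRunAux
      by_cases hb₀ : b₀ = prev
      · subst hb₀
        rw [if_pos rfl]
        refine ih b₀ (cur + 1) best a b (by omega) (by simpa [Nat.add_comm, Nat.add_assoc, Nat.add_left_comm] using hb) ?_
        intro k hk1 hk2
        rw [← S_cons_same, ← S_cons_same]
        exact hconst k hk1 hk2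
      · rw [if_neg hb₀]
        rcases Nat.lt_or_ge b cur with hbc | hbc
        · calc b + 1 - a ≤ cur := by omega
            _ ≤ max cur best := le_max_left _ _
            _ ≤ _ := le_maxRunAux_best t b₀ 1 (max cur best)
        · rcases Nat.lt_or_ge a cur with hac | hac
          · -- contradiction : change at cur - 1
            exfalso
            have h := hconst (cur - 1) (by omega) (by omega)
            rw [show cur - 1 + 1 = 0 + cur by omega] at h
            rw [show cur - 1 = cur - 1 by rfl] at h
            rw [S_cons_new] at h
            unfold S at h
            rw [if_pos (by omega), if_pos (by omega)] at h
            exact hb₀ h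
          · -- shift
            have h := ih b₀ 1 (max cur best) (a - cur) (b - cur) (le_refl 1)
              (by simp only [List.length_cons] at hb; omega) ?_
            · omega
            · intro k hk1 hk2
              have h2 := hconst (k + cur) (by omega) (by omega)
              rw [show k + cur + 1 = (k + 1) + cur by omega] at h2
              rw [S_cons_new, S_cons_new] at h2
              exact h2

lemma maxRunAux_lb : ∀ (t : List Bool) (prev : Bool) (cur best : ℕ), 1 ≤ cur →
    ∃ a b, b < cur + t.length ∧
      (∀ k, a ≤ k → k < b → S t prev cur (k + 1) = S t prev cur k) ∧
      maxRunAux t prev cur best ≤ max best (b + 1 - a) := by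
  intro t
  induction t with
  | nil =>
      intro prev cur best hcur
      refine ⟨0, cur - 1, by simp; omega, ?_, ?_⟩
      · intro k hk1 hk2
        unfold S
        rw [if_pos (by omega), if_pos (by omega)]
      · simp only [maxRunAux]
        omega
  | cons b₀ t ih =>
      intro prev cur best hcur
      unfold maxRunAux
      by_cases hb₀ : b₀ = prev
      · subst hb₀
        rw [if_pos rfl]
        obtain ⟨a, b, h1, h2, h3⟩ := ih b₀ (cur + 1) best (by omega)
        refine ⟨a, b, by simp only [List.length_cons]; omega, ?_, h3⟩
        intro k hk1 hk2
        rw [S_cons_same, S_cons_same]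
        exact h2 k hk1 hk2
      · rw [if_neg hb₀]
        obtain ⟨a, b, h1, h2, h3⟩ := ih b₀ 1 (max cur best) (le_refl 1)
        rcases le_or_gt  (b + 1 - a) cur with hc | hc
        · refine ⟨0, cur - 1, by simp only [List.length_cons]; omega, ?_, ?_⟩
          · intro k hk1 hk2
            unfold S
            rw [if_pos (by omega), if_pos (by omega)]
          · omega
        · refine ⟨a + cur, b + cur, by simp only [List.length_cons]; omega, ?_, ?_⟩
          · intro k hk1 hk2
            have h4 := h2 (k - cur) (by omega) (by omega)
            rw [← S_cons_new b₀ t prev cur (k - cur), ← S_cons_new b₀ t prev cur (k - cur + 1),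
              show k - cur + cur = k by omega, show k - cur + 1 + cur = k + 1 by omega] at h4
            exact h4
          · omega

lemma S_eq_e (hd : Bool) (tl : List Bool) (k : ℕ) : S tl hd 2 k = e (hd :: tl) k := by
  match k with
  | 0 => rfl
  | 1 => rfl
  | (k + 2) =>
      unfold S e
      rw [if_neg (by omega), show k + 2 - 2 = k by omega,
        show k + 2 - 1 = k + 1 by omega, List.getD_cons_succ]

lemma run_le_maxRun (l : List Bool) (a b : ℕ) (hb : b ≤ l.length) (hC : Cst l a b) :
    b + 1 - a ≤ maxRun l := by
  match l with
  | [] =>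
      simp only [List.length_nil, Nat.le_zero] at hb
      subst hb
      simp only [maxRun]
      omega
  | hd :: tl =>
      simp only [maxRun]
      refine maxRunAux_ub tl hd 2 0 a b (by omega)
        (by simp only [List.length_cons] at hb ⊢; omega) ?_
      intro k hk1 hk2
      rw [S_eq_e, S_eq_e]
      exact hC k hk1 hk2

lemma exists_max_run (l : List Bool) :
    ∃ a b, b ≤ l.length ∧ Cst l a b ∧ maxRun l ≤ b + 1 - a := by
  match l with
  | [] =>
      exact ⟨0, 0, le_refl 0, fun k h1 h2 => by omega, le_refl 1⟩
  | hd :: tl =>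
      obtain ⟨a, b, h1, h2, h3⟩ := maxRunAux_lb tl hd 2 0 (by omega)
      refine ⟨a, b, by simp only [List.length_cons]; omega, ?_, by simpa [maxRun] using h3⟩
      intro k hk1 hk2
      rw [← S_eq_e, ← S_eq_e]
      exact h2 k hk1 hk2


/-! ### main theorem -/

theorem main (l : List Bool) : distNum (thresholdGraph l) = maxRun l := by
  have hn : ∀ v : Fin (l.length + 1), (v : ℕ) ≤ l.length :=
    fun v => Nat.lt_succ_iff.mp v.isLt
  -- the distinguishing labeling with maxRun l colors
  have hlt : ∀ v : Fin (l.length + 1), (v : ℕ) - runStart l (v : ℕ) < maxRun l := by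
    intro v
    have h1 := run_le_maxRun l (runStart l (v : ℕ)) (v : ℕ) (hn v) (cst_runStart l (v : ℕ))
    have h2 := runStart_le l (v : ℕ)
    omega
  set φ : Fin (l.length + 1) → Fin (maxRun l) :=
    fun v => ⟨(v : ℕ) - runStart l (v : ℕ), hlt v⟩ with hφdef
  have hdist : IsDistinguishing (thresholdGraph l) φ := by
    intro π hlabel v
    have hg : gcount l (π v) = gcount l v := gcount_map l π v
    have htwin := gcount_eq_twin l hg
    have hrs : runStart l ((π v : Fin (l.length + 1)) : ℕ) = runStart l (v : ℕ) := by
      rcases le_total ((π v : Fin (l.length + 1)) : ℕ) (v : ℕ) with h | h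
      · exact runStart_congr l h (twin_cst l h htwin.1 htwin.2)
      · exact (runStart_congr l h (twin_cst l h htwin.2 htwin.1)).symm
    have hval : ((π v : Fin (l.length + 1)) : ℕ) - runStart l ((π v : Fin (l.length + 1)) : ℕ)
        = (v : ℕ) - runStart l (v : ℕ) := congrArg Fin.val (hlabel v)
    have h1 := runStart_le l ((π v : Fin (l.length + 1)) : ℕ)
    have h2 := runStart_le l (v : ℕ)
    apply Fin.ext
    omega
  have hmem : maxRun l ∈ {c : ℕ | ∃ ψ : Fin (l.length + 1) → Fin c,
      IsDistinguishing (thresholdGraph l) ψ} := ⟨φ, hdist⟩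
  -- the lower bound
  have hlow : ∀ c ∈ {c : ℕ | ∃ ψ : Fin (l.length + 1) → Fin c,
      IsDistinguishing (thresholdGraph l) ψ}, maxRun l ≤ c := by
    rintro c ⟨ψ, hψ⟩
    by_contra hc
    push_neg at hc
    obtain ⟨a, b, hb, hC, hm⟩ := exists_max_run l
    set T : Finset (Fin (l.length + 1)) :=
      Finset.univ.filter (fun w => a ≤ (w : ℕ) ∧ (w : ℕ) ≤ b) with hT
    have hcard : b + 1 - a ≤ T.card := by
      have := Finset.card_le_card_of_injOn
        (f := fun k : ℕ => (⟨k % (l.length + 1), Nat.mod_lt k (by omega)⟩ : Fin (l.length + 1)))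
        (s := Finset.Icc a b) (t := T) ?_ ?_
      · simpa [Nat.card_Icc] using this
      · intro k hk
        simp only [Finset.mem_coe, Finset.mem_Icc] at hk
        have hkl : k % (l.length + 1) = k := Nat.mod_eq_of_lt (by omega)
        simp only [hT, Finset.mem_coe, Finset.mem_filter, Finset.mem_univ, true_and, hkl]
        exact hk
      · intro x hx y hy hxy
        simp only [Finset.mem_coe, Finset.mem_Icc] at hx hy
        have hx' : x % (l.length + 1) = x := Nat.mod_eq_of_lt (by omega)
        have hy' : y % (l.length + 1) = y := Nat.mod_eq_of_lt (by omega)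
        have := congrArg Fin.val hxy
        simpa [hx', hy'] using this
    have hcardlt : (Finset.univ : Finset (Fin c)).card < T.card := by
      simp only [Finset.card_univ, Fintype.card_fin]
      omega
    obtain ⟨x, hx, y, hy, hxy, hψxy⟩ :=
      Finset.exists_ne_map_eq_of_card_lt_of_maps_to hcardlt
        (fun w _ => Finset.mem_univ (ψ w))
    simp only [hT, Finset.mem_filter, Finset.mem_univ, true_and] at hx hy
    have htwin : Pn l (x : ℕ) (y : ℕ) ∧ Pn l (y : ℕ) (x : ℕ) := by
      rcases le_total (x : ℕ) (y : ℕ) with h | h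
      · exact cst_twin l h (cst_mono l hC (by omega) (by omega))
      · exact (cst_twin l h (cst_mono l hC (by omega) (by omega))).symm
    set π := swapIso l x y hxy htwin.1 htwin.2 with hπ
    have hπx : π x = y := Equiv.swap_apply_left x y
    have hlabel : ∀ w, ψ (π w) = ψ w := by
      intro w
      rcases eq_or_ne w x with rfl | hwx
      · rw [show π w = y from Equiv.swap_apply_left w y]
        exact hψxy.symm
      · rcases eq_or_ne w y with rfl | hwy
        · rw [show π w = x from Equiv.swap_apply_right x w]
          exact hψxy
        · rw [show π w = w from Equiv.swap_apply_of_ne_of_ne hwx hwy]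
    have := hψ π hlabel x
    rw [hπx] at this
    exact hxy this.symm
  exact le_antisymm (Nat.sInf_le hmem) (le_csInf ⟨maxRun l, hmem⟩ hlow)

end TG

/-- For a threshold graph, the distinguishing number equals the size of the largest component
of its compact canonical decomposition, i.e. the length of the longest run of consecutive
additions of the same type (with the first two vertices counted together). -/
theorem distNum_thresholdGraph (l : List Bool) :
    distNum (thresholdGraph l) = maxRun l := TG.main l
end

section
/- An n-vertex graph G with degree sequence d_1 ≥ d_2 ≥ ... ≥ d_n is a split graph if and only if Σ_{i=1}^h d_i = h(h-1) + Σ_{i=h+1}^n d_i, where h = max { i : d_i ≥ i - 1 }. Moreover, if equality holds, then h = ω(G) and the h vertices of largest degree induce a clique while the remaining vertices form an independent set (i.e., they form a KS-partition). -/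
open Finset

namespace HS

variable {n : ℕ} (G : SimpleGraph (Fin n)) [DecidableRel G.Adj]

/-- number of ordered adjacent pairs (v, w) with v ∈ S, w ∈ T. -/
def E (S T : Finset (Fin n)) : ℕ := ∑ v ∈ S, (T.filter (G.Adj v)).card

lemma degree_eq (v : Fin n) :
    G.degree v = ((univ : Finset (Fin n)).filter (G.Adj v)).card := by
  rw [← SimpleGraph.neighborFinset_eq_filter]; rfl

lemma sum_degree_split (S : Finset (Fin n)) :
    ∑ v ∈ S, G.degree v = E G S S + E G S Sᶜ := by
  rw [E, E, ← Finset.sum_add_distrib]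
  refine Finset.sum_congr rfl fun v _ => ?_
  rw [degree_eq, ← Finset.card_union_of_disjoint
    (Finset.disjoint_filter_filter disjoint_compl_right), ← Finset.filter_union,
    Finset.union_compl]

lemma E_symm (S T : Finset (Fin n)) : E G S T = E G T S := by
  unfold E
  simp_rw [Finset.card_filter]
  rw [Finset.sum_comm]
  refine Finset.sum_congr rfl fun v _ => Finset.sum_congr rfl fun w _ => ?_
  simp_rw [SimpleGraph.adj_comm]

lemma E_self_le (S : Finset (Fin n)) : E G S S ≤ S.card * (S.card - 1) := by
  have : ∀ v ∈ S, (S.filter (G.Adj v)).card ≤ S.card - 1 := by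
    intro v hv
    have hsub : S.filter (G.Adj v) ⊆ S.erase v := by
      intro w hw
      simp only [Finset.mem_filter] at hw
      exact Finset.mem_erase.2 ⟨fun hwv => G.irrefl (hwv ▸ hw.2), hw.1⟩
    calc (S.filter (G.Adj v)).card ≤ (S.erase v).card := Finset.card_le_card hsub
      _ = S.card - 1 := Finset.card_erase_of_mem hv
  calc E G S S ≤ ∑ _v ∈ S, (S.card - 1) := Finset.sum_le_sum this
    _ = S.card * (S.card - 1) := by rw [Finset.sum_const, smul_eq_mul]

lemma E_self_eq_iff (S : Finset (Fin n)) :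
    E G S S = S.card * (S.card - 1) ↔ ∀ a ∈ S, ∀ b ∈ S, a ≠ b → G.Adj a b := by
  constructor
  · intro hEq a ha b hb hab
    have hle : ∀ v ∈ S, (S.filter (G.Adj v)).card ≤ (S.erase v).card := by
      intro v hv
      refine Finset.card_le_card fun w hw => ?_
      simp only [Finset.mem_filter] at hw
      exact Finset.mem_erase.2 ⟨fun hwv => G.irrefl (hwv ▸ hw.2), hw.1⟩
    have hsum : ∑ v ∈ S, (S.filter (G.Adj v)).card = ∑ v ∈ S, (S.erase v).card := by
      rw [show (∑ v ∈ S, (S.filter (G.Adj v)).card) = E G S S from rfl, hEq]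
      rw [Finset.sum_congr rfl fun v hv => Finset.card_erase_of_mem hv,
        Finset.sum_const, smul_eq_mul]
    have := (Finset.sum_eq_sum_iff_of_le hle).1 hsum a ha
    have heq : S.filter (G.Adj a) = S.erase a :=
      Finset.eq_of_subset_of_card_le
        (fun w hw => by
          simp only [Finset.mem_filter] at hw
          exact Finset.mem_erase.2 ⟨fun hwv => G.irrefl (hwv ▸ hw.2), hw.1⟩)
        (le_of_eq this.symm)
    have : b ∈ S.filter (G.Adj a) := heq ▸ Finset.mem_erase.2 ⟨hab.symm, hb⟩
    exact (Finset.mem_filter.1 this).2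
  · intro hc
    unfold E
    rw [Finset.sum_congr rfl fun v hv => ?_, Finset.sum_const, smul_eq_mul]
    have : S.filter (G.Adj v) = S.erase v := by
      ext w
      simp only [Finset.mem_filter, Finset.mem_erase]
      constructor
      · rintro ⟨hw, hadj⟩; exact ⟨fun hwv => G.irrefl (hwv ▸ hadj), hw⟩
      · rintro ⟨hwv, hw⟩; exact ⟨hw, hc v hv w hw (Ne.symm hwv)⟩
    rw [this, Finset.card_erase_of_mem hv]

lemma E_self_zero_iff (S : Finset (Fin n)) :
    E G S S = 0 ↔ ∀ a ∈ S, ∀ b ∈ S, ¬ G.Adj a b := by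
  unfold E
  rw [Finset.sum_eq_zero_iff]
  constructor
  · intro h0 a ha b hb hadj
    have := h0 a ha
    rw [Finset.card_eq_zero, Finset.filter_eq_empty_iff] at this
    exact this hb hadj
  · intro hind v hv
    rw [Finset.card_eq_zero, Finset.filter_eq_empty_iff]
    exact fun {w} hw => hind v hv w hw

lemma clique_degree {S : Finset (Fin n)}
    (hS : ∀ a ∈ S, ∀ b ∈ S, a ≠ b → G.Adj a b) {v : Fin n} (hv : v ∈ S) :
    S.card - 1 ≤ G.degree v := by
  rw [← Finset.card_erase_of_mem hv, ← SimpleGraph.card_neighborFinset_eq_degree]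
  refine Finset.card_le_card fun w hw => ?_
  rw [Finset.mem_erase] at hw
  exact (SimpleGraph.mem_neighborFinset G v w).2 (hS v hv w hw.2 (Ne.symm hw.1))

lemma normalize : ∀ (k : ℕ) (A B : Finset (Fin n)), B.card ≤ k →
    A ∪ B = univ → Disjoint A B →
    (∀ a ∈ A, ∀ b ∈ A, a ≠ b → G.Adj a b) → (∀ a ∈ B, ∀ b ∈ B, ¬ G.Adj a b) →
    ∃ A' B' : Finset (Fin n), A' ∪ B' = univ ∧ Disjoint A' B' ∧
      (∀ a ∈ A', ∀ b ∈ A', a ≠ b → G.Adj a b) ∧ (∀ a ∈ B', ∀ b ∈ B', ¬ G.Adj a b) ∧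
      (∀ b ∈ B', ∃ a ∈ A', ¬ G.Adj b a) := by
  intro k
  induction k with
  | zero =>
    intro A B hcard hu hdisj hA hB
    have hBempty : B = ∅ := Finset.card_eq_zero.1 (Nat.le_zero.1 hcard)
    exact ⟨A, B, hu, hdisj, hA, hB, fun b hb => absurd hb (by simp [hBempty])⟩
  | succ k ih =>
    intro A B hcard hu hdisj hA hB
    by_cases hex : ∀ b ∈ B, ∃ a ∈ A, ¬ G.Adj b a
    · exact ⟨A, B, hu, hdisj, hA, hB, hex⟩
    · push_neg at hex
      obtain ⟨b, hb, hball⟩ := hex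
      have hbA : b ∉ A := Finset.disjoint_right.1 hdisj hb
      refine ih (insert b A) (B.erase b) ?_ ?_ ?_ ?_ ?_
      · have h1 : (B.erase b).card = B.card - 1 := Finset.card_erase_of_mem hb
        have h2 : 1 ≤ B.card := Finset.card_pos.2 ⟨b, hb⟩
        omega
      · ext v
        simp only [Finset.mem_union, Finset.mem_insert, Finset.mem_erase, Finset.mem_univ,
          iff_true]
        by_cases hvb : v = b
        · exact Or.inl (Or.inl hvb)
        · have : v ∈ A ∪ B := hu ▸ Finset.mem_univ v
          rcases Finset.mem_union.1 this with hvA | hvB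
          · exact Or.inl (Or.inr hvA)
          · exact Or.inr ⟨hvb, hvB⟩
      · rw [Finset.disjoint_left]
        intro v hv hv'
        rw [Finset.mem_erase] at hv'
        rcases Finset.mem_insert.1 hv with rfl | hvA
        · exact hv'.1 rfl
        · exact Finset.disjoint_left.1 hdisj hvA hv'.2
      · intro a ha a' ha' hne
        rcases Finset.mem_insert.1 ha with rfl | haA
        · rcases Finset.mem_insert.1 ha' with rfl | ha'A
          · exact absurd rfl hne
          · exact hball a' ha'A
        · rcases Finset.mem_insert.1 ha' with rfl | ha'A
          · exact (hball a haA).symm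
          · exact hA a haA a' ha'A hne
      · intro a ha a' ha'
        exact hB a (Finset.mem_of_mem_erase ha) a' (Finset.mem_of_mem_erase ha')

lemma sorted_ge (d : ℕ → ℕ) (e : Fin n ≃ Fin n)
    (hd : ∀ i : Fin n, d i = G.degree (e i))
    (hsorted : ∀ i j : ℕ, i ≤ j → j < n → d j ≤ d i)
    (T : Finset (Fin n)) (m : ℕ)
    (hT : ∀ v ∈ T, m ≤ G.degree v) (ht : T.Nonempty) : m ≤ d (T.card - 1) := by
  by_contra hlt
  push_neg at hlt
  set s : Finset (Fin n) := univ.filter (fun i : Fin n => m ≤ d i) with hs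
  have h1 : T.card ≤ s.card := by
    refine Finset.card_le_card_of_injOn (fun v => e.symm v) (fun v hv => ?_)
      (fun x _ y _ hxy => e.symm.injective hxy)
    rw [hs, Finset.mem_coe, Finset.mem_filter]
    refine ⟨Finset.mem_univ _, ?_⟩
    rw [hd (e.symm v), e.apply_symm_apply]
    exact hT v hv
  have h2 : s.card ≤ T.card - 1 := by
    have : s.card ≤ (Finset.range (T.card - 1)).card := by
      refine Finset.card_le_card_of_injOn (fun i => (i : ℕ)) (fun i hi => ?_)
        (fun x _ y _ hxy => Fin.val_injective hxy)
      rw [hs, Finset.mem_coe, Finset.mem_filter] at hi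
      rw [Finset.mem_coe, Finset.mem_range]
      by_contra hge
      push_neg at hge
      exact absurd (le_trans hi.2 (hsorted (T.card - 1) i hge i.isLt)) (not_le.2 hlt)
    simpa using this
  have : 1 ≤ T.card := Finset.card_pos.2 ht
  omega

lemma card_filter_symm_lt (e : Fin n ≃ Fin n) (m : ℕ) (hm : m ≤ n) :
    (univ.filter fun v : Fin n => (e.symm v : ℕ) < m).card = m := by
  have key : (univ.filter fun v : Fin n => (e.symm v : ℕ) < m).card
      = (Finset.range m).card := by
    refine Finset.card_bij (fun v _ => ((e.symm v : ℕ))) ?_ ?_ ?_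
    · intro v hv; rw [Finset.mem_filter] at hv; exact Finset.mem_range.2 hv.2
    · intro x hx y hy hxy
      exact e.symm.injective (Fin.val_injective hxy)
    · intro j hj
      rw [Finset.mem_range] at hj
      refine ⟨e ⟨j, lt_of_lt_of_le hj hm⟩, ?_, ?_⟩
      · rw [Finset.mem_filter]; simp [hj]
      · simp
  simpa using key

lemma sum_filter_symm_lt (d : ℕ → ℕ) (e : Fin n ≃ Fin n)
    (hd : ∀ i : Fin n, d i = G.degree (e i)) (m : ℕ) (hm : m ≤ n) :
    ∑ v ∈ (univ.filter fun v : Fin n => (e.symm v : ℕ) < m), G.degree v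
      = ∑ i ∈ Finset.range m, d i := by
  refine Finset.sum_bij' (fun v _ => ((e.symm v : ℕ)))
    (fun i hi => e ⟨i, lt_of_lt_of_le (Finset.mem_range.1 hi) hm⟩) ?_ ?_ ?_ ?_ ?_
  · intro v hv; rw [Finset.mem_filter] at hv; exact Finset.mem_range.2 hv.2
  · intro i hi; rw [Finset.mem_filter]; simp [Finset.mem_range.1 hi]
  · intro v hv; simp
  · intro i hi; simp
  · intro v hv
    rw [hd (e.symm v), e.apply_symm_apply]

lemma sum_degree_univ (d : ℕ → ℕ) (e : Fin n ≃ Fin n)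
    (hd : ∀ i : Fin n, d i = G.degree (e i)) :
    ∑ v : Fin n, G.degree v = ∑ i ∈ Finset.range n, d i := by
  calc ∑ v : Fin n, G.degree v = ∑ i : Fin n, d ↑i :=
        (Fintype.sum_equiv e (fun i => d ↑i) (fun v => G.degree v) hd).symm
    _ = ∑ i ∈ Finset.range n, d i := Fin.sum_univ_eq_sum_range _ n

end HS

open HS


/-- The Hammer–Simeone splittance criterion: a graph with non-increasing degree sequence
`d₁ ≥ ... ≥ dₙ` (here `d` is 0-indexed, so `d i` is the `(i+1)`-st largest degree) is split
iff `Σ_{i=1}^h dᵢ = h(h-1) + Σ_{i=h+1}^n dᵢ`, where `h = max { i : dᵢ ≥ i-1 }` (1-indexed).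
Moreover, in case of equality, `h = ω(G)`, and the `h` vertices of largest degree induce a
clique while the rest form an independent set. -/
theorem hammer_simeone (n : ℕ) (hn : 2 ≤ n) (G : SimpleGraph (Fin n)) [DecidableRel G.Adj]
    (d : ℕ → ℕ) (e : Fin n ≃ Fin n)
    (hd : ∀ i : Fin n, d i = G.degree (e i))
    (hsorted : ∀ i j : ℕ, i ≤ j → j < n → d j ≤ d i)
    (h : ℕ)
    (hh : IsGreatest {i | 1 ≤ i ∧ i ≤ n ∧ i - 1 ≤ d (i - 1)} h) :
    ((∑ i ∈ Finset.range h, d i = h * (h - 1) + ∑ i ∈ Finset.Ico h n, d i) ↔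
      ∃ A B : Finset (Fin n), A ∪ B = Finset.univ ∧ Disjoint A B ∧
        (∀ a ∈ A, ∀ b ∈ A, a ≠ b → G.Adj a b) ∧ (∀ a ∈ B, ∀ b ∈ B, ¬ G.Adj a b)) ∧
    ((∑ i ∈ Finset.range h, d i = h * (h - 1) + ∑ i ∈ Finset.Ico h n, d i) →
      G.cliqueNum = h ∧
      ∃ A B : Finset (Fin n), A ∪ B = Finset.univ ∧ Disjoint A B ∧ A.card = h ∧
        (∀ a ∈ A, ∀ b ∈ A, a ≠ b → G.Adj a b) ∧ (∀ a ∈ B, ∀ b ∈ B, ¬ G.Adj a b) ∧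
        (∀ a ∈ A, ∀ b ∈ B, G.degree b ≤ G.degree a)) := by
  obtain ⟨⟨h1, hhn, hdh⟩, hmax⟩ := hh
  have hmax' : ∀ i : ℕ, 1 ≤ i → i ≤ n → i - 1 ≤ d (i - 1) → i ≤ h := fun i a b c => hmax ⟨a, b, c⟩
  set T : Finset (Fin n) := univ.filter (fun v : Fin n => (e.symm v : ℕ) < h) with hT
  have cardT : T.card = h := card_filter_symm_lt e h hhn
  have memT : ∀ v : Fin n, v ∈ T ↔ (e.symm v : ℕ) < h := fun v => by simp [hT]
  have degv : ∀ v : Fin n, G.degree v = d (e.symm v) := fun v => by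
    rw [hd (e.symm v), e.apply_symm_apply]
  have sumT : ∑ v ∈ T, G.degree v = ∑ i ∈ Finset.range h, d i :=
    sum_filter_symm_lt G d e hd h hhn
  have sumUniv : ∑ v : Fin n, G.degree v = ∑ i ∈ Finset.range n, d i :=
    sum_degree_univ G d e hd
  have splitRange : ∑ i ∈ Finset.range h, d i + ∑ i ∈ Finset.Ico h n, d i
      = ∑ i ∈ Finset.range n, d i := Finset.sum_range_add_sum_Ico d hhn
  have sumTadd : ∑ v ∈ T, G.degree v + ∑ v ∈ Tᶜ, G.degree v = ∑ v : Fin n, G.degree v :=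
    Finset.sum_add_sum_compl T _
  have sumTc : ∑ v ∈ Tᶜ, G.degree v = ∑ i ∈ Finset.Ico h n, d i := by omega
  -- degree bounds determined by h
  have hTub : ∀ v ∈ T, h - 1 ≤ G.degree v := by
    intro v hv
    rw [degv]
    have h2 : (e.symm v : ℕ) ≤ h - 1 := by have := (memT v).1 hv; omega
    exact le_trans hdh (hsorted _ _ h2 (by omega))
  have hTclb : ∀ v : Fin n, v ∉ T → G.degree v ≤ h - 1 := by
    intro v hv
    rw [degv]
    have hge : h ≤ (e.symm v : ℕ) := not_lt.1 (fun hlt => hv ((memT v).2 hlt))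
    have hn1 : h + 1 ≤ n := by have := (e.symm v).isLt; omega
    have hdhh : d h ≤ h - 1 := by
      by_contra hc
      push_neg at hc
      have h3 : h + 1 ≤ h := hmax' (h+1) (by omega) hn1 (by simpa using (by omega : h ≤ d h))
      omega
    exact le_trans (hsorted h (e.symm v) hge (e.symm v).isLt) hdhh
  -- forward direction
  have fwd : (∑ i ∈ Finset.range h, d i = h * (h - 1) + ∑ i ∈ Finset.Ico h n, d i) →
      G.cliqueNum = h ∧
      ∃ A B : Finset (Fin n), A ∪ B = Finset.univ ∧ Disjoint A B ∧ A.card = h ∧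
        (∀ a ∈ A, ∀ b ∈ A, a ≠ b → G.Adj a b) ∧ (∀ a ∈ B, ∀ b ∈ B, ¬ G.Adj a b) ∧
        (∀ a ∈ A, ∀ b ∈ B, G.degree b ≤ G.degree a) := by
    intro heq
    have e1 : ∑ v ∈ T, G.degree v = E G T T + E G T Tᶜ := sum_degree_split G T
    have e2 : ∑ v ∈ Tᶜ, G.degree v = E G Tᶜ Tᶜ + E G T Tᶜ := by
      rw [sum_degree_split G Tᶜ, compl_compl, E_symm G Tᶜ T]
    have hle : E G T T ≤ h * (h - 1) := by
      have := E_self_le G T; rwa [cardT] at this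
    have hkey : E G T T = h * (h - 1) ∧ E G Tᶜ Tᶜ = 0 := by omega
    have hcliqueT : ∀ a ∈ T, ∀ b ∈ T, a ≠ b → G.Adj a b := by
      refine (E_self_eq_iff G T).1 ?_
      rw [cardT]; exact hkey.1
    have hindep : ∀ a ∈ Tᶜ, ∀ b ∈ Tᶜ, ¬ G.Adj a b := (E_self_zero_iff G Tᶜ).1 hkey.2
    have hmono : ∀ a ∈ T, ∀ b ∈ Tᶜ, G.degree b ≤ G.degree a := by
      intro a ha b hb
      rw [degv, degv]
      have hah : (e.symm a : ℕ) < h := (memT a).1 ha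
      have hbh : h ≤ (e.symm b : ℕ) :=
        not_lt.1 (fun hlt => (Finset.mem_compl.1 hb) ((memT b).2 hlt))
      exact hsorted (e.symm a) (e.symm b) (by omega) (e.symm b).isLt
    refine ⟨?_, T, Tᶜ, Finset.union_compl T, disjoint_compl_right, cardT,
      hcliqueT, hindep, hmono⟩
    apply le_antisymm
    · obtain ⟨C, hC⟩ := G.exists_isNClique_cliqueNum
      rcases Nat.eq_zero_or_pos G.cliqueNum with h0 | h0
      · omega
      · have hcc : 1 ≤ C.card := by rw [hC.card_eq]; omega
        have hCclique : ∀ a ∈ C, ∀ b ∈ C, a ≠ b → G.Adj a b :=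
          fun a ha b hb hab => hC.isClique ha hb hab
        have hdegC : ∀ v ∈ C, C.card - 1 ≤ G.degree v :=
          fun v hv => clique_degree G hCclique hv
        have hds := sorted_ge G d e hd hsorted C (C.card - 1) hdegC
          (Finset.card_pos.1 hcc)
        have hCn : C.card ≤ n := le_trans (Finset.card_le_univ C) (by simp)
        have := hmax' C.card hcc hCn hds
        have hce := hC.card_eq
        omega
    · have hcl : G.IsClique (T : Set (Fin n)) := fun a ha b hb hab =>
        hcliqueT a ha b hb hab
      have := SimpleGraph.IsClique.card_le_cliqueNum (tc := hcl)
      rwa [cardT] at this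
  -- backward direction
  have bwd : (∃ A B : Finset (Fin n), A ∪ B = Finset.univ ∧ Disjoint A B ∧
        (∀ a ∈ A, ∀ b ∈ A, a ≠ b → G.Adj a b) ∧ (∀ a ∈ B, ∀ b ∈ B, ¬ G.Adj a b)) →
      ∑ i ∈ Finset.range h, d i = h * (h - 1) + ∑ i ∈ Finset.Ico h n, d i := by
    rintro ⟨A0, B0, hu0, hd0, hA0, hB0⟩
    obtain ⟨A, B, hu, hdisj, hA, hB, hprop⟩ :=
      normalize G B0.card A0 B0 le_rfl hu0 hd0 hA0 hB0
    have hBc : B = Aᶜ := by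
      ext v
      rw [Finset.mem_compl]
      constructor
      · intro hvB hvA; exact Finset.disjoint_left.1 hdisj hvA hvB
      · intro hvA
        rcases Finset.mem_union.1 (hu ▸ Finset.mem_univ v) with h' | h'
        · exact absurd h' hvA
        · exact h'
    have hdegA : ∀ a ∈ A, A.card - 1 ≤ G.degree a := fun a ha => clique_degree G hA ha
    have hdegB : ∀ b ∈ B, G.degree b ≤ A.card - 1 := by
      intro b hb
      obtain ⟨a₀, ha₀, hna⟩ := hprop b hb
      have hsub : G.neighborFinset b ⊆ A.erase a₀ := by
        intro w hw
        rw [SimpleGraph.mem_neighborFinset] at hw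
        have hwA : w ∈ A := by
          rcases Finset.mem_union.1 (hu ▸ Finset.mem_univ w) with h' | h'
          · exact h'
          · exact absurd hw (hB b hb w h')
        exact Finset.mem_erase.2 ⟨fun hwa => hna (hwa ▸ hw), hwA⟩
      calc G.degree b = (G.neighborFinset b).card :=
            (SimpleGraph.card_neighborFinset_eq_degree G b).symm
        _ ≤ (A.erase a₀).card := Finset.card_le_card hsub
        _ = A.card - 1 := Finset.card_erase_of_mem ha₀
    have hAn : A.card ≤ n := le_trans (Finset.card_le_univ A) (by simp)
    -- A.card = h
    have hk : A.card = h := by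
      by_cases hBe : B = ∅
      · have hAuniv : A = univ := by rw [← hu, hBe, Finset.union_empty]
        have hkn : A.card = n := by rw [hAuniv, Finset.card_univ, Fintype.card_fin]
        have hnh : n ≤ h := by
          refine hmax' n (by omega) le_rfl ?_
          have hmem : e ⟨n - 1, by omega⟩ ∈ A :=
            Finset.eq_univ_iff_forall.1 hAuniv _
          have h5 : d (n - 1) = G.degree (e ⟨n - 1, by omega⟩) := hd ⟨n - 1, by omega⟩
          have h6 := hdegA _ hmem
          rw [h5]
          omega
        omega
      · obtain ⟨b, hb⟩ := Finset.nonempty_of_ne_empty hBe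
        obtain ⟨a₀, ha₀, _⟩ := hprop b hb
        have hk1 : 1 ≤ A.card := Finset.card_pos.2 ⟨a₀, ha₀⟩
        have hkh : A.card ≤ h := by
          refine hmax' A.card hk1 hAn ?_
          exact sorted_ge G d e hd hsorted A (A.card - 1) hdegA ⟨a₀, ha₀⟩
        by_contra hne
        have hlt : A.card + 1 ≤ h := by omega
        set W : Finset (Fin n) := univ.filter (fun v : Fin n => (e.symm v : ℕ) < A.card + 1)
          with hW
        have cardW : W.card = A.card + 1 := card_filter_symm_lt e (A.card + 1) (by omega)
        have hnsub : ¬ W ⊆ A := fun hsub => by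
          have := Finset.card_le_card hsub; omega
        obtain ⟨v, hvW, hvA⟩ := Finset.not_subset.1 hnsub
        have hvB : v ∈ B := by
          rcases Finset.mem_union.1 (hu ▸ Finset.mem_univ v) with h' | h'
          · exact absurd h' hvA
          · exact h'
        have hub := hdegB v hvB
        have hvlt : (e.symm v : ℕ) < A.card + 1 := by
          rw [hW] at hvW; simpa using hvW
        have hlb : h - 1 ≤ G.degree v := by
          rw [degv]
          exact le_trans hdh (hsorted _ _ (by omega) (by omega))
        omega
    -- sum over A equals sum over T
    have sumA : ∑ v ∈ A, G.degree v = ∑ v ∈ T, G.degree v := by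
      have key1 : ∀ v ∈ T, v ∉ A → G.degree v = h - 1 := by
        intro v hv hvA
        have hvB : v ∈ B := hBc ▸ Finset.mem_compl.2 hvA
        have := hdegB v hvB
        have := hTub v hv
        omega
      have key2 : ∀ v ∈ A, v ∉ T → G.degree v = h - 1 := by
        intro v hv hvT
        have := hdegA v hv
        have := hTclb v hvT
        omega
      have hsplit : ∀ (S U : Finset (Fin n)),
          ∑ v ∈ S, G.degree v
            = ∑ v ∈ S ∩ U, G.degree v + ∑ v ∈ S \ U, G.degree v := by
        intro S U
        rw [← Finset.filter_mem_eq_inter, Finset.sdiff_eq_filter]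
        exact (Finset.sum_filter_add_sum_filter_not S (· ∈ U) _).symm
      have hTA : ∑ v ∈ T \ A, G.degree v = (T \ A).card * (h - 1) := by
        rw [Finset.sum_congr rfl (fun v hv => key1 v (Finset.mem_sdiff.1 hv).1
          (Finset.mem_sdiff.1 hv).2), Finset.sum_const, smul_eq_mul]
      have hAT : ∑ v ∈ A \ T, G.degree v = (A \ T).card * (h - 1) := by
        rw [Finset.sum_congr rfl (fun v hv => key2 v (Finset.mem_sdiff.1 hv).1
          (Finset.mem_sdiff.1 hv).2), Finset.sum_const, smul_eq_mul]
      have c1 := Finset.card_sdiff_add_card_inter T A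
      have c2 := Finset.card_sdiff_add_card_inter A T
      have hcards : (T \ A).card = (A \ T).card := by
        rw [Finset.inter_comm] at c1
        omega
      rw [hsplit A T, hsplit T A, Finset.inter_comm A T, hAT, hTA, hcards]
    have sumB : ∑ v ∈ B, G.degree v = ∑ v ∈ Tᶜ, G.degree v := by
      have htot : ∑ v ∈ A, G.degree v + ∑ v ∈ B, G.degree v = ∑ v : Fin n, G.degree v := by
        rw [← Finset.sum_union hdisj, hu]
      omega
    -- conclude
    have eA : ∑ v ∈ A, G.degree v = h * (h - 1) + E G A Aᶜ := by
      rw [sum_degree_split G A]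
      congr 1
      rw [(E_self_eq_iff G A).2 hA, hk]
    have eB : ∑ v ∈ Aᶜ, G.degree v = E G A Aᶜ := by
      rw [sum_degree_split G Aᶜ, compl_compl, E_symm G Aᶜ A]
      have : E G Aᶜ Aᶜ = 0 := (E_self_zero_iff G Aᶜ).2 (hBc ▸ hB)
      omega
    rw [hBc] at sumB
    omega
  exact ⟨⟨fun heq => (fwd heq).2.imp (fun A hA' => hA'.imp fun B hB' =>
    ⟨hB'.1, hB'.2.1, hB'.2.2.2.1, hB'.2.2.2.2.1⟩), bwd⟩, fwd⟩
end
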